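/- arXiv:1611.05718 — 13 statements merged into one kernel-verified Lean document; each statement's English description precedes it below -/
import Mathlib

section
/- Let L be a Lie algebra over ℂ and let φ : L × L → L be a skew-symmetric biderivation. Then for all x, y, u, v ∈ L one has [φ(x,y),[u,v]] = [[x,y],φ(u,v)]. -/
/-- Let `L` be a Lie algebra over `ℂ` and `φ` a skew-symmetric biderivation of `L`.
Then `⁅φ x y, ⁅u, v⁆⁆ = ⁅⁅x, y⁆, φ u v⁆` for all `x, y, u, v`. -/
theorem skew_biderivation_bracket_eq
    {L : Type*} [LieRing L] [LieAlgebra ℂ L]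
    (φ : L →ₗ[ℂ] L →ₗ[ℂ] L)
    (hskew : ∀ x y : L, φ x y = - φ y x)
    (hbd₁ : ∀ x y z : L, φ ⁅x, y⁆ z = ⁅x, φ y z⁆ + ⁅φ x z, y⁆)
    (hbd₂ : ∀ x y z : L, φ x ⁅y, z⁆ = ⁅φ x y, z⁆ + ⁅y, φ x z⁆) :
    ∀ x y u v : L, ⁅φ x y, ⁅u, v⁆⁆ = ⁅⁅x, y⁆, φ u v⁆ := by
  -- A helper to kill factors of two (we are over `ℂ`).
  have half : ∀ t : L, t + t = 0 → t = 0 := by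
    intro t ht
    have h2 : (2 : ℂ) • t = 0 := by rw [two_smul]; exact ht
    have := smul_eq_zero.mp h2
    rcases this with h | h
    · exact absurd h two_ne_zero
    · exact h
  -- `φ x x = 0`
  have hdiag : ∀ x : L, φ x x = 0 := by
    intro x
    have h := hskew x x
    refine half _ ?_
    nth_rewrite 2 [h]
    simp
  -- Key identity obtained by expanding `φ ⁅x,y⁆ ⁅u,v⁆` in two ways.
  have key : ∀ x y u v : L,
      ⁅φ y u, ⁅x, v⁆⁆ + ⁅φ x v, ⁅y, u⁆⁆ = ⁅φ x u, ⁅y, v⁆⁆ + ⁅φ y v, ⁅x, u⁆⁆ := by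
    intro x y u v
    have flip : ∀ (p q c : L), ⁅φ p q, c⁆ = -⁅c, φ p q⁆ := fun p q c => (lie_skew (φ p q) c).symm
    have e1 : φ ⁅x, y⁆ ⁅u, v⁆ =
        ⁅x, ⁅φ y u, v⁆ + ⁅u, φ y v⁆⁆ + ⁅⁅φ x u, v⁆ + ⁅u, φ x v⁆, y⁆ := by
      rw [hbd₁, hbd₂, hbd₂]
    have e2 : φ ⁅x, y⁆ ⁅u, v⁆ =
        ⁅⁅x, φ y u⁆ + ⁅φ x u, y⁆, v⁆ + ⁅u, ⁅x, φ y v⁆ + ⁅φ x v, y⁆⁆ := by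
      rw [hbd₂, hbd₁, hbd₁]
    have e := e1.symm.trans e2
    simp only [lie_add, add_lie, lie_lie, flip, lie_neg, neg_lie, neg_neg, neg_sub,
      sub_neg_eq_add] at e ⊢
    rw [← sub_eq_zero] at e ⊢
    rw [← e]
    abel
  -- `⁅φ x u, ⁅x, u⁆⁆ = 0`
  have h0 : ∀ x u : L, ⁅φ x u, ⁅x, u⁆⁆ = 0 := by
    intro x u
    have k := key x u u x
    have hux : (⁅u, x⁆ : L) = -⁅x, u⁆ := by rw [← lie_skew]
    rw [hskew u x, hux] at k
    simp only [hdiag, lie_self, zero_lie, lie_zero, neg_lie, lie_neg, zero_add, add_zero] at k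
    -- k : 0 = -⁅φ x u, ⁅x, u⁆⁆ + -⁅φ x u, ⁅x, u⁆⁆  (up to arrangement)
    refine half _ ?_
    rw [show (⁅φ x u, ⁅x, u⁆⁆ : L) + ⁅φ x u, ⁅x, u⁆⁆
        = -(-⁅φ x u, ⁅x, u⁆⁆ + -⁅φ x u, ⁅x, u⁆⁆) from by abel]
    rw [← k]
    simp
  -- polarize in the first variable
  have h1 : ∀ x y u : L, ⁅φ x u, ⁅y, u⁆⁆ + ⁅φ y u, ⁅x, u⁆⁆ = 0 := by
    intro x y u
    have h := h0 (x + y) u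
    simp only [map_add, LinearMap.add_apply, add_lie, lie_add] at h
    simp only [h0, zero_add, add_zero] at h
    rw [← h]
    abel
  -- polarize in the second variable
  have h2 : ∀ x y u v : L,
      ⁅φ x u, ⁅y, v⁆⁆ + ⁅φ x v, ⁅y, u⁆⁆ + ⁅φ y u, ⁅x, v⁆⁆ + ⁅φ y v, ⁅x, u⁆⁆ = 0 := by
    intro x y u v
    have h := h1 x y (u + v)
    simp only [map_add, LinearMap.add_apply, lie_add, add_lie] at h
    rw [show ⁅φ x u, ⁅y, v⁆⁆ + ⁅φ x v, ⁅y, u⁆⁆ + ⁅φ y u, ⁅x, v⁆⁆ + ⁅φ y v, ⁅x, u⁆⁆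
        = (⁅φ x u, ⁅y, u⁆⁆ + ⁅φ x v, ⁅y, u⁆⁆ + (⁅φ x u, ⁅y, v⁆⁆ + ⁅φ x v, ⁅y, v⁆⁆)
            + (⁅φ y u, ⁅x, u⁆⁆ + ⁅φ y v, ⁅x, u⁆⁆ + (⁅φ y u, ⁅x, v⁆⁆ + ⁅φ y v, ⁅x, v⁆⁆)))
          - ((⁅φ x u, ⁅y, u⁆⁆ + ⁅φ y u, ⁅x, u⁆⁆) + (⁅φ x v, ⁅y, v⁆⁆ + ⁅φ y v, ⁅x, v⁆⁆)) from
      by abel]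
    rw [h, h1 x y u, h1 x y v]
    simp
  -- conclude
  intro x y u v
  have hA := h2 x u y v
  have hB := key x u y v
  -- hA : ⁅φ x y,⁅u,v⁆⁆ + ⁅φ x v,⁅u,y⁆⁆ + ⁅φ u y,⁅x,v⁆⁆ + ⁅φ u v,⁅x,y⁆⁆ = 0
  -- hB : ⁅φ u y,⁅x,v⁆⁆ + ⁅φ x v,⁅u,y⁆⁆ = ⁅φ x y,⁅u,v⁆⁆ + ⁅φ u v,⁅x,y⁆⁆
  have hsum : (⁅φ x y, ⁅u, v⁆⁆ + ⁅φ u v, ⁅x, y⁆⁆) + (⁅φ x y, ⁅u, v⁆⁆ + ⁅φ u v, ⁅x, y⁆⁆) = 0 := by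
    rw [show (⁅φ x y, ⁅u, v⁆⁆ + ⁅φ u v, ⁅x, y⁆⁆) + (⁅φ x y, ⁅u, v⁆⁆ + ⁅φ u v, ⁅x, y⁆⁆)
        = (⁅φ x y, ⁅u, v⁆⁆ + ⁅φ x v, ⁅u, y⁆⁆ + ⁅φ u y, ⁅x, v⁆⁆ + ⁅φ u v, ⁅x, y⁆⁆)
          + ((⁅φ x y, ⁅u, v⁆⁆ + ⁅φ u v, ⁅x, y⁆⁆) - (⁅φ u y, ⁅x, v⁆⁆ + ⁅φ x v, ⁅u, y⁆⁆)) from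
      by abel]
    rw [hA, ← hB, sub_self, add_zero]
  have hz := half _ hsum
  have : ⁅φ x y, ⁅u, v⁆⁆ = -⁅φ u v, ⁅x, y⁆⁆ := by
    rw [eq_neg_iff_add_eq_zero]; exact hz
  rw [this, lie_skew]
end

section
/- Let L be a Lie algebra over ℂ and let φ : L × L → L be a skew-symmetric biderivation. Then for all x, y ∈ L one has [φ(x,y),[x,y]] = 0. -/
/-- Let `L` be a Lie algebra over `ℂ` and `φ` a skew-symmetric biderivation of `L`.
Then `⁅φ x y, ⁅x, y⁆⁆ = 0` for all `x, y`. -/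
theorem skew_biderivation_bracket_self
    {L : Type*} [LieRing L] [LieAlgebra ℂ L]
    (φ : L →ₗ[ℂ] L →ₗ[ℂ] L)
    (hskew : ∀ x y : L, φ x y = - φ y x)
    (hbd₁ : ∀ x y z : L, φ ⁅x, y⁆ z = ⁅x, φ y z⁆ + ⁅φ x z, y⁆)
    (hbd₂ : ∀ x y z : L, φ x ⁅y, z⁆ = ⁅φ x y, z⁆ + ⁅y, φ x z⁆) :
    ∀ x y : L, ⁅φ x y, ⁅x, y⁆⁆ = 0 := by
  have hdiag : ∀ x : L, φ x x = 0 := by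
    intro x
    have h := hskew x x
    have h2 : (2 : ℂ) • φ x x = 0 := by
      rw [two_smul]
      nth_rewrite 1 [h]
      simp
    rcases smul_eq_zero.mp h2 with h | h
    · norm_num at h
    · exact h
  intro x y
  have h0 : φ ⁅x, y⁆ ⁅x, y⁆ = 0 := hdiag _
  rw [hbd₂ ⁅x, y⁆ x y] at h0
  have ha : φ ⁅x, y⁆ x = - ⁅x, φ x y⁆ := by
    rw [hbd₁, hdiag, hskew y x]
    simp
  have hb : φ ⁅x, y⁆ y = ⁅φ x y, y⁆ := by
    rw [hbd₁, hdiag]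
    simp
  rw [ha, hb] at h0
  have jac := leibniz_lie x (φ x y) y
  -- h0 : ⁅-⁅x, φ x y⁆, y⁆ + ⁅x, ⁅φ x y, y⁆⁆ = 0
  rw [neg_lie, neg_add_eq_zero] at h0
  -- h0 : ⁅⁅x, φ x y⁆, y⁆ = ⁅x, ⁅φ x y, y⁆⁆
  rw [jac] at h0
  exact (left_eq_add.mp h0)
end

section
/- Let L be a Lie algebra over ℂ and let φ : L × L → L be a skew-symmetric biderivation. If x, y ∈ L satisfy [x,y] = 0, then φ(x,y) lies in the centralizer C_L([L,L]) of the derived subalgebra [L,L], i.e. [φ(x,y), [u,v]] = 0 for all u, v ∈ L. -/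
/-- Jacobi-type identity: `⁅a, ⁅b, c⁆⁆ = ⁅⁅a, b⁆, c⁆ - ⁅⁅a, c⁆, b⁆`. -/
lemma skew_bd_lemA {L : Type*} [LieRing L] (a b c : L) :
    ⁅a, ⁅b, c⁆⁆ = ⁅⁅a, b⁆, c⁆ - ⁅⁅a, c⁆, b⁆ := by
  have j := lie_jacobi a c b
  rw [← lie_skew b a, lie_neg] at j
  rw [lie_lie, lie_lie]
  linear_combination (norm := abel) j

/-- Jacobi-type identity: `⁅p, ⁅x, u⁆⁆ = ⁅u, ⁅x, p⁆⁆ - ⁅x, ⁅u, p⁆⁆`. -/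
lemma skew_bd_lemB {L : Type*} [LieRing L] (p x u : L) :
    ⁅p, ⁅x, u⁆⁆ = ⁅u, ⁅x, p⁆⁆ - ⁅x, ⁅u, p⁆⁆ := by
  have h1 : ⁅⁅x, u⁆, p⁆ = ⁅x, ⁅u, p⁆⁆ - ⁅u, ⁅x, p⁆⁆ := lie_lie x u p
  have h2 : -⁅⁅x, u⁆, p⁆ = ⁅p, ⁅x, u⁆⁆ := lie_skew _ _
  linear_combination (norm := abel) -h2 - h1

/-- Jacobi-type identity: `⁅a, ⁅u, y⁆⁆ = ⁅u, ⁅a, y⁆⁆ - ⁅⁅u, a⁆, y⁆`. -/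
lemma skew_bd_lemC {L : Type*} [LieRing L] (a u y : L) :
    ⁅a, ⁅u, y⁆⁆ = ⁅u, ⁅a, y⁆⁆ - ⁅⁅u, a⁆, y⁆ := by
  rw [lie_lie]; abel

/-- Let `L` be a Lie algebra over `ℂ` and `φ` a skew-symmetric biderivation of `L`.
If `⁅x, y⁆ = 0`, then `φ x y` centralizes the derived subalgebra:
`⁅φ x y, ⁅u, v⁆⁆ = 0` for all `u, v`. -/
theorem skew_biderivation_mem_centralizer
    {L : Type*} [LieRing L] [LieAlgebra ℂ L]
    (φ : L →ₗ[ℂ] L →ₗ[ℂ] L)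
    (hskew : ∀ x y : L, φ x y = - φ y x)
    (hbd₁ : ∀ x y z : L, φ ⁅x, y⁆ z = ⁅x, φ y z⁆ + ⁅φ x z, y⁆)
    (hbd₂ : ∀ x y z : L, φ x ⁅y, z⁆ = ⁅φ x y, z⁆ + ⁅y, φ x z⁆)
    (x y : L) (hxy : ⁅x, y⁆ = 0) :
    ∀ u v : L, ⁅φ x y, ⁅u, v⁆⁆ = 0 := by
  -- Key identity: G(a,b;c,d) + G(a,d;b,c) = 0, where
  -- G(a,b;c,d) = ⁅φ a b, ⁅c,d⁆⁆ + ⁅φ c d, ⁅a,b⁆⁆.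
  have key : ∀ a b c d : L,
      (⁅φ a b, ⁅c, d⁆⁆ + ⁅φ c d, ⁅a, b⁆⁆) + (⁅φ a d, ⁅b, c⁆⁆ + ⁅φ b c, ⁅a, d⁆⁆) = 0 := by
    intro x y u v
    -- expand φ ⁅x,u⁆ ⁅y? no: expand φ ⁅x,y⁆ ⁅u,v⁆ two ways (here (a,b,c,d) = (x,y,u,v)
    -- corresponds to (x,u,y,v) of the computation).
    have hA : φ ⁅x, u⁆ ⁅y, v⁆ =
        ⁅x, ⁅φ u y, v⁆ + ⁅y, φ u v⁆⁆ + ⁅⁅φ x y, v⁆ + ⁅y, φ x v⁆, u⁆ := by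
      rw [hbd₁ x u ⁅y, v⁆, hbd₂ u y v, hbd₂ x y v]
    have hB : φ ⁅x, u⁆ ⁅y, v⁆ =
        ⁅⁅x, φ u y⁆ + ⁅φ x y, u⁆, v⁆ + ⁅y, ⁅x, φ u v⁆ + ⁅φ x v, u⁆⁆ := by
      rw [hbd₂ ⁅x, u⁆ y v, hbd₁ x u y, hbd₁ x u v]
    have E := hA.symm.trans hB
    simp only [lie_add, add_lie] at E
    -- rewrite the four goal terms
    have e1 : ⁅φ x y, ⁅u, v⁆⁆ = ⁅⁅φ x y, u⁆, v⁆ - ⁅⁅φ x y, v⁆, u⁆ := skew_bd_lemA _ u v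
    have e2 : ⁅φ u v, ⁅x, y⁆⁆ = ⁅y, ⁅x, φ u v⁆⁆ - ⁅x, ⁅y, φ u v⁆⁆ := skew_bd_lemB _ x y
    have e3 : ⁅φ x v, ⁅y, u⁆⁆ = ⁅y, ⁅φ x v, u⁆⁆ - ⁅⁅y, φ x v⁆, u⁆ := skew_bd_lemC _ y u
    have e4 : ⁅φ y u, ⁅x, v⁆⁆ = - ⁅φ u y, ⁅x, v⁆⁆ := by rw [hskew y u, neg_lie]
    have e5 : ⁅φ u y, ⁅x, v⁆⁆ = ⁅x, ⁅φ u y, v⁆⁆ - ⁅⁅x, φ u y⁆, v⁆ := skew_bd_lemC _ x v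
    rw [e1, e2, e3, e4, e5]
    linear_combination (norm := abel) - E
  have hphixx : ∀ a : L, φ a a = 0 := by
    intro a
    have h : φ a a + φ a a = 0 := by nth_rewrite 2 [hskew a a]; simp
    have h2 : (2 : ℂ) • φ a a = 0 := by rw [two_smul]; exact h
    simpa [smul_eq_zero] using h2
  intro u v
  -- From key applied three times, G(x,y;u,v) = -G(x,y;u,v), hence G = 0.
  have k1 := key x y u v
  have k2 := key x v y u
  have k3 := key x u v y
  -- G(x,y;u,v) = -(G(x,v;y,u)) = G(x,u;v,y)? chain gives 2 G = 0.
  have hG2 : (⁅φ x y, ⁅u, v⁆⁆ + ⁅φ u v, ⁅x, y⁆⁆) + (⁅φ x y, ⁅u, v⁆⁆ + ⁅φ u v, ⁅x, y⁆⁆) = 0 := by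
    linear_combination (norm := abel) k1 - k2 + k3
  rw [hxy] at hG2
  simp only [lie_zero, add_zero] at hG2
  have h2 : (2 : ℂ) • ⁅φ x y, ⁅u, v⁆⁆ = 0 := by rw [two_smul]; exact hG2
  simpa [smul_eq_zero] using h2
end

section
/- Fix λ, μ ∈ ℂ and s ∈ {0, 1/2}, and suppose λ = 0 and 2μ ∈ ℤ. Then the center Z(𝓛) of the deformative Schrödinger–Virasoro Lie algebra 𝓛 = 𝓛(λ,μ,s) is the one-dimensional subspace ℂ·M_{−2μ}. -/
/-- A realization of the deformative Schrödinger–Virasoro Lie algebra `𝓛(λ, μ, s)`: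
a Lie algebra `V` over `ℂ` with a basis `{E n, M n, Y n : n ∈ ℤ}` (where `E n`
plays the role of `L_n`, `M n` of `M_n`, and `Y n` of `Y_{n+s}`, and `t ∈ ℤ`
satisfies `(t : ℂ) = 2 * s`), whose only nontrivial brackets of basis elements are
`[L_n, L_m] = (m - n) L_{n+m}`, `[L_n, M_m] = (m - λn + 2μ) M_{n+m}`,
`[L_n, Y_{m+s}] = (m + s - ((λ+1)/2) n + μ) Y_{n+m+s}` and
`[Y_{n+s}, Y_{m+s}] = (m - n) M_{n+m+2s}`. -/
structure DSV (lam mu s : ℂ) (t : ℤ) (V : Type*) [LieRing V] [LieAlgebra ℂ V] where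
  E : ℤ → V
  M : ℤ → V
  Y : ℤ → V
  ht : (t : ℂ) = 2 * s
  basis : Module.Basis (ℤ ⊕ ℤ ⊕ ℤ) ℂ V
  basis_inl : ∀ n : ℤ, basis (Sum.inl n) = E n
  basis_inr_inl : ∀ n : ℤ, basis (Sum.inr (Sum.inl n)) = M n
  basis_inr_inr : ∀ n : ℤ, basis (Sum.inr (Sum.inr n)) = Y n
  bracket_EE : ∀ n m : ℤ, ⁅E n, E m⁆ = ((m : ℂ) - n) • E (n + m)
  bracket_EM : ∀ n m : ℤ, ⁅E n, M m⁆ = ((m : ℂ) - lam * n + 2 * mu) • M (n + m)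
  bracket_EY : ∀ n m : ℤ,
    ⁅E n, Y m⁆ = ((m : ℂ) + s - ((lam + 1) / 2) * n + mu) • Y (n + m)
  bracket_YY : ∀ n m : ℤ, ⁅Y n, Y m⁆ = ((m : ℂ) - n) • M (n + m + t)
  bracket_MM : ∀ n m : ℤ, ⁅M n, M m⁆ = 0
  bracket_MY : ∀ n m : ℤ, ⁅M n, Y m⁆ = 0


/-- Auxiliary: if a linear endomorphism `g` maps each basis vector `b i` to
`χ i • b (σ i)` with `σ` injective, then for any `x`,
`b.repr (g x) (σ j) = χ j * b.repr x j`. -/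
lemma dsv_repr_aux {ι V : Type*} [AddCommGroup V] [Module ℂ V] (b : Module.Basis ι ℂ V)
    (g : V →ₗ[ℂ] V) (σ : ι → ι) (hσ : Function.Injective σ) (χ : ι → ℂ)
    (h : ∀ i, g (b i) = χ i • b (σ i)) (x : V) (j : ι) :
    b.repr (g x) (σ j) = χ j * b.repr x j := by
  have key : (b.coord (σ j)).comp g = χ j • b.coord j := by
    classical
    apply b.ext
    intro i
    simp only [LinearMap.comp_apply, h i, LinearMap.smul_apply, map_smul,
      Module.Basis.coord_apply, Module.Basis.repr_self, smul_eq_mul]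
    by_cases hij : i = j
    · subst hij; simp
    · rw [Finsupp.single_apply, Finsupp.single_apply,
        if_neg (fun hc => hij (hσ hc)), if_neg hij]
      ring
  have := congrArg (fun f : V →ₗ[ℂ] ℂ => f x) key
  simpa [Module.Basis.coord_apply] using this

/-- If `λ = 0` and `2μ ∈ ℤ` (witnessed by `k ∈ ℤ` with `(k : ℂ) = -2μ`), the
center of `𝓛(λ, μ, s)` is the one-dimensional subspace `ℂ • M_{-2μ}`. -/
theorem center_of_DSV_eq_span_M
    (lam mu s : ℂ) (t : ℤ) (V : Type*) [LieRing V] [LieAlgebra ℂ V]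
    (𝒟 : DSV lam mu s t V) (hs : s = 0 ∨ s = 1 / 2)
    (hlam : lam = 0) (k : ℤ) (hk : (k : ℂ) = -2 * mu) :
    𝒟.M k ≠ 0 ∧ ∀ x : V, x ∈ LieAlgebra.center ℂ V ↔ ∃ c : ℂ, x = c • 𝒟.M k := by
  subst hlam
  set B := 𝒟.basis with hB
  -- shift map on the index type and its injectivity
  let σ : ℤ → (ℤ ⊕ ℤ ⊕ ℤ) → (ℤ ⊕ ℤ ⊕ ℤ) := fun n =>
    Sum.map (fun m => n + m) (Sum.map (fun m => n + m) (fun m => n + m))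
  have hσinj : ∀ n, Function.Injective (σ n) := by
    intro n
    have hadd : Function.Injective (fun m : ℤ => n + m) := fun a b h => by
      simpa using h
    exact Function.Injective.sumMap hadd (Function.Injective.sumMap hadd hadd)
  -- eigenvalue functions for ad (E n)
  let χ : ℤ → (ℤ ⊕ ℤ ⊕ ℤ) → ℂ := fun n i =>
    match i with
    | .inl m => (m : ℂ) - n
    | .inr (.inl m) => (m : ℂ) - 0 * n + 2 * mu
    | .inr (.inr m) => (m : ℂ) + s - ((0 + 1) / 2) * n + mu
  have hbr : ∀ n : ℤ, ∀ i, (LieAlgebra.ad ℂ V (𝒟.E n)) (B i) = χ n i • B (σ n i) := by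
    intro n i
    rcases i with m | m | m
    · simp only [LieAlgebra.ad_apply, hB, 𝒟.basis_inl, σ, Sum.map_inl, χ]
      rw [𝒟.bracket_EE]
    · simp only [LieAlgebra.ad_apply, hB, 𝒟.basis_inl, 𝒟.basis_inr_inl, σ,
        Sum.map_inr, Sum.map_inl, χ]
      rw [𝒟.bracket_EM]
    · simp only [LieAlgebra.ad_apply, hB, 𝒟.basis_inl, 𝒟.basis_inr_inr, σ,
        Sum.map_inr, χ]
      rw [𝒟.bracket_EY]
  constructor
  · rw [← 𝒟.basis_inr_inl]
    exact B.ne_zero _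
  intro x
  constructor
  · -- forward direction
    intro hx
    rw [LieAlgebra.center, LieModule.mem_maxTrivSubmodule] at hx
    have hzero : ∀ n : ℤ, ∀ j, χ n j * B.repr x j = 0 := by
      intro n j
      have h := dsv_repr_aux B (LieAlgebra.ad ℂ V (𝒟.E n)) (σ n) (hσinj n) (χ n)
        (hbr n) x j
      rw [LieAlgebra.ad_apply, hx (𝒟.E n)] at h
      simpa using h.symm
    refine ⟨B.repr x (Sum.inr (Sum.inl k)), ?_⟩
    have hrepr : B.repr x =
        Finsupp.single (Sum.inr (Sum.inl k)) (B.repr x (Sum.inr (Sum.inl k))) := by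
      ext j
      by_cases hj : j = Sum.inr (Sum.inl k)
      · subst hj; simp
      · rw [Finsupp.single_apply, if_neg (fun hc => hj hc.symm)]
        rcases j with m | m | m
        · -- coefficient of E m vanishes
          by_cases hm : (m : ℂ) = 0
          · have h1 := hzero 1 (Sum.inl m)
            simp only [χ, hm] at h1
            have : (0 : ℂ) - ((1:ℤ):ℂ) ≠ 0 := by norm_num
            exact (mul_eq_zero.mp h1).resolve_left this
          · have h0 := hzero 0 (Sum.inl m)
            simp only [χ] at h0
            rw [show (m : ℂ) - (0 : ℤ) = (m : ℂ) by push_cast; ring] at h0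
            exact (mul_eq_zero.mp h0).resolve_left hm
        · -- coefficient of M m vanishes for m ≠ k
          have hmk : m ≠ k := fun hc => hj (by rw [hc])
          have h0 := hzero 0 (Sum.inr (Sum.inl m))
          simp only [χ] at h0
          have hne : (m : ℂ) - 0 * (0 : ℤ) + 2 * mu ≠ 0 := by
            intro hc
            apply hmk
            have : (m : ℂ) = (k : ℂ) := by rw [hk]; push_cast at hc ⊢; linear_combination hc
            exact_mod_cast this
          exact (mul_eq_zero.mp h0).resolve_left hne
        · -- coefficient of Y m vanishes
          by_cases hm : (m : ℂ) + s + mu = 0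
          · have h1 := hzero 1 (Sum.inr (Sum.inr m))
            simp only [χ] at h1
            have hne : (m : ℂ) + s - (0 + 1) / 2 * (1 : ℤ) + mu ≠ 0 := by
              push_cast
              intro hc
              have : (-(1:ℂ)/2) = 0 := by linear_combination hc - hm
              norm_num at this
            exact (mul_eq_zero.mp h1).resolve_left hne
          · have h0 := hzero 0 (Sum.inr (Sum.inr m))
            simp only [χ] at h0
            have hne : (m : ℂ) + s - (0 + 1) / 2 * (0 : ℤ) + mu ≠ 0 := by
              push_cast
              intro hc
              exact hm (by linear_combination hc)
            exact (mul_eq_zero.mp h0).resolve_left hne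
    have := congrArg B.repr.symm hrepr
    rw [LinearEquiv.symm_apply_apply, B.repr_symm_single, 𝒟.basis_inr_inl] at this
    exact this
  · -- backward direction
    rintro ⟨c, rfl⟩
    rw [LieAlgebra.center, LieModule.mem_maxTrivSubmodule]
    intro y
    -- the map y ↦ ⁅y, M k⁆ is linear and vanishes on the basis
    let T : V →ₗ[ℂ] V :=
      { toFun := fun z => ⁅z, 𝒟.M k⁆
        map_add' := fun a b => add_lie a b _
        map_smul' := fun r a => smul_lie r a _ }
    have hT : T = 0 := by
      apply B.ext
      intro i
      rcases i with m | m | m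
      · show ⁅B (Sum.inl m), 𝒟.M k⁆ = 0
        rw [hB, 𝒟.basis_inl, 𝒟.bracket_EM]
        have : (k : ℂ) - 0 * (m : ℤ) + 2 * mu = 0 := by
          rw [hk]; ring
        rw [this, zero_smul]
      · show ⁅B (Sum.inr (Sum.inl m)), 𝒟.M k⁆ = 0
        rw [hB, 𝒟.basis_inr_inl, 𝒟.bracket_MM]
      · show ⁅B (Sum.inr (Sum.inr m)), 𝒟.M k⁆ = 0
        rw [hB, 𝒟.basis_inr_inr, ← lie_skew, 𝒟.bracket_MY, neg_zero]
    have hTy : ⁅y, 𝒟.M k⁆ = 0 := by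
      have := congrArg (fun f : V →ₗ[ℂ] V => f y) hT
      simpa [T] using this
    rw [lie_smul, hTy, smul_zero]
end

section
/- Fix λ, μ ∈ ℂ and s ∈ {0, 1/2}, and suppose it is NOT the case that both λ = 0 and 2μ ∈ ℤ. Then the center of the deformative Schrödinger–Virasoro Lie algebra 𝓛(λ,μ,s) is zero. -/
/-- If it is not the case that `λ = 0` and `2μ ∈ ℤ`, then the center of
`𝓛(λ, μ, s)` is zero. -/
theorem center_of_DSV_eq_bot
    (lam mu s : ℂ) (t : ℤ) (V : Type*) [LieRing V] [LieAlgebra ℂ V]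
    (𝒟 : DSV lam mu s t V) (hs : s = 0 ∨ s = 1 / 2)
    (hcond : ¬ (lam = 0 ∧ ∃ r : ℤ, (r : ℂ) = 2 * mu)) :
    LieAlgebra.center ℂ V = ⊥ := by
  rw [eq_bot_iff]
  intro z hz
  rw [LieSubmodule.mem_bot]
  have hz' : ∀ x : V, ⁅x, z⁆ = 0 := LieModule.mem_maxTrivSubmodule ℂ V V z |>.mp hz
  -- key extraction lemma
  have key : ∀ (x : V) (σ : ℤ ⊕ ℤ ⊕ ℤ → ℤ ⊕ ℤ ⊕ ℤ) (g : ℤ ⊕ ℤ ⊕ ℤ → ℂ),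
      Function.Injective σ → (∀ i, ⁅x, 𝒟.basis i⁆ = g i • 𝒟.basis (σ i)) →
      ∀ j, g j * 𝒟.basis.repr z j = 0 := by
    intro x σ g hσ hx j
    have hmaps : (Finsupp.lapply (σ j) : ((ℤ ⊕ ℤ ⊕ ℤ) →₀ ℂ) →ₗ[ℂ] ℂ) ∘ₗ
          (𝒟.basis.repr : V →ₗ[ℂ] ((ℤ ⊕ ℤ ⊕ ℤ) →₀ ℂ)) ∘ₗ (LieAlgebra.ad ℂ V x)
        = g j • ((Finsupp.lapply j : ((ℤ ⊕ ℤ ⊕ ℤ) →₀ ℂ) →ₗ[ℂ] ℂ) ∘ₗ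
          (𝒟.basis.repr : V →ₗ[ℂ] ((ℤ ⊕ ℤ ⊕ ℤ) →₀ ℂ))) := by
      apply 𝒟.basis.ext
      intro i
      simp only [LinearMap.comp_apply, LinearMap.smul_apply, LieAlgebra.ad_apply,
        LinearEquiv.coe_coe, Finsupp.lapply_apply, hx i, map_smul, Module.Basis.repr_self,
        Finsupp.smul_apply, Finsupp.single_apply, smul_eq_mul]
      by_cases h : i = j
      · subst h; simp
      · rw [if_neg (fun hc => h (hσ hc)), if_neg h]; ring
    have h2 := LinearMap.congr_fun hmaps z
    simp only [LinearMap.comp_apply, LieAlgebra.ad_apply, LinearEquiv.coe_coe, hz' x,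
      map_zero, Finsupp.zero_apply, LinearMap.smul_apply, Finsupp.lapply_apply,
      smul_eq_mul] at h2
    exact h2.symm
  -- brackets with E k
  have keyE : ∀ (k : ℤ) (j : ℤ ⊕ ℤ ⊕ ℤ),
      (Sum.elim (fun n : ℤ => (n : ℂ) - k)
        (Sum.elim (fun n : ℤ => (n : ℂ) - lam * k + 2 * mu)
          (fun n : ℤ => (n : ℂ) + s - ((lam + 1) / 2) * k + mu)) j) * 𝒟.basis.repr z j = 0 := by
    intro k j
    apply key (𝒟.E k) (Sum.map (k + ·) (Sum.map (k + ·) (k + ·)))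
    · exact (add_right_injective k).sumMap ((add_right_injective k).sumMap
        (add_right_injective k))
    · rintro (n | n | n)
      · simpa [𝒟.basis_inl] using 𝒟.bracket_EE k n
      · simpa [𝒟.basis_inl, 𝒟.basis_inr_inl] using 𝒟.bracket_EM k n
      · simpa [𝒟.basis_inl, 𝒟.basis_inr_inr] using 𝒟.bracket_EY k n
  -- brackets with Y k
  have keyY : ∀ (k n : ℤ), ((n : ℂ) - k) * 𝒟.basis.repr z (Sum.inr (Sum.inr n)) = 0 := by
    intro k n
    apply key (𝒟.Y k)
      (Sum.elim (fun m : ℤ => Sum.inr (Sum.inr (m + k)))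
        (Sum.elim (fun m : ℤ => Sum.inl m) (fun m : ℤ => Sum.inr (Sum.inl (k + m + t)))))
      (Sum.elim (fun m : ℤ => -((k : ℂ) + s - ((lam + 1) / 2) * m + mu))
        (Sum.elim (fun _ : ℤ => (0 : ℂ)) (fun m : ℤ => (m : ℂ) - k)))
      ?_ ?_ (Sum.inr (Sum.inr n))
    · rintro (a | a | a) (b | b | b) h <;>
        simp only [Sum.elim_inl, Sum.elim_inr, Sum.inl.injEq, Sum.inr.injEq,
          reduceCtorEq] at h ⊢ <;> omega
    · rintro (m | m | m)
      · have := 𝒟.bracket_EY m k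
        rw [𝒟.basis_inl, ← lie_skew, this]
        simp only [Sum.elim_inl, 𝒟.basis_inr_inr, neg_smul, add_comm]
      · rw [𝒟.basis_inr_inl, ← lie_skew, 𝒟.bracket_MY m k]
        simp [𝒟.basis_inl]
      · simpa [𝒟.basis_inr_inr, 𝒟.basis_inr_inl] using 𝒟.bracket_YY k m
  -- coordinates all vanish
  have hrepr : 𝒟.basis.repr z = 0 := by
    ext j
    rw [Finsupp.zero_apply]
    rcases j with n | n | n
    · have h := keyE (n - 1) (Sum.inl n)
      simp only [Sum.elim_inl] at h
      have : ((n : ℂ) - ((n - 1 : ℤ) : ℂ)) = 1 := by push_cast; ring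
      rw [this, one_mul] at h
      exact h
    · have h0 := keyE 0 (Sum.inr (Sum.inl n))
      have h1 := keyE 1 (Sum.inr (Sum.inl n))
      simp only [Sum.elim_inr, Sum.elim_inl, Int.cast_zero, Int.cast_one, mul_zero,
        mul_one, sub_zero] at h0 h1
      by_cases hlam : lam = 0
      · have hr : ¬ ∃ r : ℤ, (r : ℂ) = 2 * mu := fun hr => hcond ⟨hlam, hr⟩
        have hne : (n : ℂ) + 2 * mu ≠ 0 := fun hc =>
          hr ⟨-n, by push_cast; linear_combination -hc⟩
        rcases mul_eq_zero.mp h0 with h | h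
        · exact absurd h hne
        · exact h
      · have : lam * 𝒟.basis.repr z (Sum.inr (Sum.inl n)) = 0 := by
          linear_combination h0 - h1
        exact (mul_eq_zero.mp this).resolve_left hlam
    · have h := keyY (n - 1) n
      have : ((n : ℂ) - ((n - 1 : ℤ) : ℂ)) = 1 := by push_cast; ring
      rw [this, one_mul] at h
      exact h
  exact (LinearEquiv.map_eq_zero_iff _).mp hrepr
end

section
/- Fix λ, μ ∈ ℂ and s ∈ {0, 1/2}, and suppose λ = −3 and μ ∈ s + ℤ. Then the derived subalgebra [𝓛,𝓛] of the deformative Schrödinger–Virasoro Lie algebra 𝓛 = 𝓛(λ,μ,s) has codimension one, and 𝓛 = [𝓛,𝓛] ⊕ ℂ·Y_{−μ}; equivalently, the quotient 𝓛/[𝓛,𝓛] is one-dimensional and spanned by the image of Y_{−μ}. -/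
/-- If `λ = -3` and `μ ∈ s + ℤ`, then `𝓛 = [𝓛, 𝓛] ⊕ ℂ • Y_{-μ}`, where
`Y_{-μ}` is the basis vector `Y k` with `k + s = -μ`; in particular the derived
subalgebra has codimension one and the quotient `𝓛/[𝓛, 𝓛]` is one-dimensional,
spanned by the image of `Y_{-μ}`. -/
theorem derived_of_DSV_codim_one
    (lam mu s : ℂ) (t : ℤ) (V : Type*) [LieRing V] [LieAlgebra ℂ V]
    (𝒟 : DSV lam mu s t V) (hs : s = 0 ∨ s = 1 / 2)
    (hlam : lam = -3) (hmu : ∃ r : ℤ, mu = s + r)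
    (k : ℤ) (hk : (k : ℂ) = -mu - s) :
    𝒟.Y k ≠ 0 ∧
    (LieSubmodule.toSubmodule (⁅(⊤ : LieIdeal ℂ V), (⊤ : LieIdeal ℂ V)⁆ : LieIdeal ℂ V)
        ⊔ Submodule.span ℂ {𝒟.Y k} = ⊤) ∧
    (LieSubmodule.toSubmodule (⁅(⊤ : LieIdeal ℂ V), (⊤ : LieIdeal ℂ V)⁆ : LieIdeal ℂ V)
        ⊓ Submodule.span ℂ {𝒟.Y k} = ⊥) := by
  classical
  set b := 𝒟.basis with hb
  set i₀ : ℤ ⊕ ℤ ⊕ ℤ := Sum.inr (Sum.inr k) with hi₀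
  set f : V →ₗ[ℂ] ℂ := b.coord i₀ with hf
  set D : Submodule ℂ V :=
    LieSubmodule.toSubmodule (⁅(⊤ : LieIdeal ℂ V), (⊤ : LieIdeal ℂ V)⁆ : LieIdeal ℂ V) with hD
  have hfb : ∀ j, f (b j) = if j = i₀ then 1 else 0 := by
    intro j
    simp [hf, Module.Basis.coord_apply, Finsupp.single_apply]
  have hcoef : ∀ n m : ℤ, (m : ℂ) + s - ((lam + 1) / 2) * n + mu = ((n + m : ℤ) : ℂ) - k := by
    intro n m
    rw [hlam, hk]
    push_cast
    ring
  -- f kills all brackets of basis vectors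
  have hbb : ∀ i j, f ⁅b i, b j⁆ = 0 := by
    have hEE : ∀ n m : ℤ, f ⁅𝒟.E n, 𝒟.E m⁆ = 0 := by
      intro n m
      rw [𝒟.bracket_EE, map_smul, ← 𝒟.basis_inl, ← hb, hfb]
      simp [hi₀]
    have hEM : ∀ n m : ℤ, f ⁅𝒟.E n, 𝒟.M m⁆ = 0 := by
      intro n m
      rw [𝒟.bracket_EM, map_smul, ← 𝒟.basis_inr_inl, ← hb, hfb]
      simp [hi₀]
    have hEY : ∀ n m : ℤ, f ⁅𝒟.E n, 𝒟.Y m⁆ = 0 := by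
      intro n m
      rw [𝒟.bracket_EY, map_smul, ← 𝒟.basis_inr_inr, ← hb, hfb, hcoef]
      by_cases h : n + m = k
      · simp [hi₀, h]
      · simp [hi₀, h]
    have hYY : ∀ n m : ℤ, f ⁅𝒟.Y n, 𝒟.Y m⁆ = 0 := by
      intro n m
      rw [𝒟.bracket_YY, map_smul, ← 𝒟.basis_inr_inl, ← hb, hfb]
      simp [hi₀]
    rintro (n | n | n) (m | m | m) <;>
      simp only [hb, 𝒟.basis_inl, 𝒟.basis_inr_inl, 𝒟.basis_inr_inr]
    · exact hEE n m
    · exact hEM n m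
    · exact hEY n m
    · rw [← lie_skew, map_neg, hEM m n, neg_zero]
    · rw [𝒟.bracket_MM, map_zero]
    · rw [𝒟.bracket_MY, map_zero]
    · rw [← lie_skew, map_neg, hEY m n, neg_zero]
    · rw [← lie_skew, map_neg, 𝒟.bracket_MY, map_zero, neg_zero]
    · exact hYY n m
  have hB : ∀ x y : V, f ⁅x, y⁆ = 0 := by
    let B : V →ₗ[ℂ] V →ₗ[ℂ] ℂ := LinearMap.mk₂ ℂ (fun x y => f ⁅x, y⁆)
      (fun x x' y => by show f ⁅x + x', y⁆ = f ⁅x, y⁆ + f ⁅x', y⁆; rw [add_lie, map_add])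
      (fun c x y => by show f ⁅c • x, y⁆ = c • f ⁅x, y⁆; rw [smul_lie, map_smul])
      (fun x y y' => by show f ⁅x, y + y'⁆ = f ⁅x, y⁆ + f ⁅x, y'⁆; rw [lie_add, map_add])
      (fun c x y => by show f ⁅x, c • y⁆ = c • f ⁅x, y⁆; rw [lie_smul, map_smul])
    have h0 : B = 0 := by
      apply b.ext; intro i; apply b.ext; intro j
      simpa [B] using hbb i j
    intro x y
    have := LinearMap.congr_fun (LinearMap.congr_fun h0 x) y
    simpa [B] using this
  have hder_le : D ≤ LinearMap.ker f := by
    rw [hD, LieSubmodule.lieIdeal_oper_eq_linear_span']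
    refine Submodule.span_le.2 ?_
    rintro z ⟨x, -, y, -, rfl⟩
    exact hB x y
  have hlie : ∀ x y : V, ⁅x, y⁆ ∈ D := by
    intro x y
    rw [hD, LieSubmodule.mem_toSubmodule]
    exact LieSubmodule.lie_mem_lie (LieSubmodule.mem_top _) (LieSubmodule.mem_top _)
  -- E m ∈ D
  have hE : ∀ m : ℤ, 𝒟.E m ∈ D := by
    intro m
    have e1 : (-1 : ℤ) + (m + 1) = m := by ring
    have e2 : (1 : ℤ) + (m - 1) = m := by ring
    have h1 : ⁅𝒟.E (-1), 𝒟.E (m + 1)⁆ = ((m : ℂ) + 2) • 𝒟.E m := by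
      rw [𝒟.bracket_EE, e1]; push_cast; ring_nf
    have h2 : ⁅𝒟.E 1, 𝒟.E (m - 1)⁆ = ((m : ℂ) - 2) • 𝒟.E m := by
      rw [𝒟.bracket_EE, e2]; push_cast; ring_nf
    have h4 : 𝒟.E m = (4 : ℂ)⁻¹ • (⁅𝒟.E (-1), 𝒟.E (m + 1)⁆ - ⁅𝒟.E 1, 𝒟.E (m - 1)⁆) := by
      rw [h1, h2, ← sub_smul, smul_smul]
      norm_num
    rw [h4]
    exact D.smul_mem _ (D.sub_mem (hlie _ _) (hlie _ _))
  have hM : ∀ m : ℤ, 𝒟.M m ∈ D := by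
    intro m
    have e2 : (1 : ℤ) + (m - 1) = m := by ring
    have c1 : ((m - 1 : ℤ) : ℂ) - lam * ((1 : ℤ) : ℂ) + 2 * mu = (m : ℂ) + 2 + 2 * mu := by
      rw [hlam]; push_cast; ring
    have c2 : ((m : ℤ) : ℂ) - lam * ((0 : ℤ) : ℂ) + 2 * mu = (m : ℂ) + 2 * mu := by
      rw [hlam]; push_cast; ring
    have h1 : ⁅𝒟.E 1, 𝒟.M (m - 1)⁆ = ((m : ℂ) + 2 + 2 * mu) • 𝒟.M m := by
      rw [𝒟.bracket_EM, e2, c1]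
    have h2 : ⁅𝒟.E 0, 𝒟.M m⁆ = ((m : ℂ) + 2 * mu) • 𝒟.M m := by
      rw [𝒟.bracket_EM, zero_add, c2]
    have h4 : 𝒟.M m = (2 : ℂ)⁻¹ • (⁅𝒟.E 1, 𝒟.M (m - 1)⁆ - ⁅𝒟.E 0, 𝒟.M m⁆) := by
      rw [h1, h2, ← sub_smul, smul_smul]
      norm_num
    rw [h4]
    exact D.smul_mem _ (D.sub_mem (hlie _ _) (hlie _ _))
  have hY : ∀ j : ℤ, j ≠ k → 𝒟.Y j ∈ D := by
    intro j hj
    have h1 : ⁅𝒟.E 0, 𝒟.Y j⁆ = ((j : ℂ) - k) • 𝒟.Y j := by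
      rw [𝒟.bracket_EY, zero_add, hcoef, zero_add]
    have hne : (j : ℂ) - k ≠ 0 := by
      rw [sub_ne_zero]
      exact_mod_cast fun h => hj (by exact_mod_cast h)
    have h4 : 𝒟.Y j = ((j : ℂ) - k)⁻¹ • ⁅𝒟.E 0, 𝒟.Y j⁆ := by
      rw [h1, smul_smul, inv_mul_cancel₀ hne, one_smul]
    rw [h4]
    exact D.smul_mem _ (hlie _ _)
  refine ⟨?_, ?_, ?_⟩
  · rw [← 𝒟.basis_inr_inr]
    exact b.ne_zero _
  · rw [eq_top_iff, ← b.span_eq]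
    refine Submodule.span_le.2 ?_
    rintro v ⟨(n | n | n), rfl⟩
    · rw [hb, 𝒟.basis_inl]
      exact Submodule.mem_sup_left (hE n)
    · rw [hb, 𝒟.basis_inr_inl]
      exact Submodule.mem_sup_left (hM n)
    · rw [hb, 𝒟.basis_inr_inr]
      by_cases h : n = k
      · subst h
        exact Submodule.mem_sup_right (Submodule.mem_span_singleton_self _)
      · exact Submodule.mem_sup_left (hY n h)
  · rw [eq_bot_iff]
    rintro x ⟨hxD, hxs⟩
    obtain ⟨c, rfl⟩ := Submodule.mem_span_singleton.1 hxs
    have h0 : f (c • 𝒟.Y k) = 0 := hder_le hxD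
    have hfY : f (𝒟.Y k) = 1 := by
      rw [← 𝒟.basis_inr_inr, ← hb, hfb]
      simp [hi₀]
    rw [map_smul, hfY, smul_eq_mul, mul_one] at h0
    simp [h0]
end

section
/- Fix λ, μ ∈ ℂ and s ∈ {0, 1/2}, and suppose it is NOT the case that both λ = −3 and μ ∈ s + ℤ. Then the deformative Schrödinger–Virasoro Lie algebra 𝓛 = 𝓛(λ,μ,s) is perfect, i.e. 𝓛 = [𝓛,𝓛]. -/
lemma DSV.mem_of_smul_mem {V : Type*} [LieRing V] [LieAlgebra ℂ V]
    (I : LieIdeal ℂ V) {c : ℂ} (hc : c ≠ 0) {x : V} (h : c • x ∈ I) : x ∈ I := by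
  have h2 := I.smul_mem c⁻¹ h
  rwa [smul_smul, inv_mul_cancel₀ hc, one_smul] at h2

/-- If it is not the case that `λ = -3` and `μ ∈ s + ℤ`, then `𝓛(λ, μ, s)`
is perfect: `𝓛 = [𝓛, 𝓛]`. -/
theorem DSV_perfect
    (lam mu s : ℂ) (t : ℤ) (V : Type*) [LieRing V] [LieAlgebra ℂ V]
    (𝒟 : DSV lam mu s t V) (hs : s = 0 ∨ s = 1 / 2)
    (hcond : ¬ (lam = -3 ∧ ∃ r : ℤ, mu = s + r)) :
    (⁅(⊤ : LieIdeal ℂ V), (⊤ : LieIdeal ℂ V)⁆ : LieIdeal ℂ V) = ⊤ := by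
  set I : LieIdeal ℂ V := ⁅(⊤ : LieIdeal ℂ V), (⊤ : LieIdeal ℂ V)⁆ with hI
  have lie_mem : ∀ a b : V, ⁅a, b⁆ ∈ I := fun a b =>
    LieSubmodule.lie_mem_lie (LieSubmodule.mem_top a) (LieSubmodule.mem_top b)
  -- E's
  have hE : ∀ n : ℤ, 𝒟.E n ∈ I := by
    intro n
    by_cases hn : n = 0
    · subst hn
      have h := lie_mem (𝒟.E (-1)) (𝒟.E 1)
      rw [𝒟.bracket_EE (-1) 1] at h
      norm_num at h
      exact DSV.mem_of_smul_mem I two_ne_zero h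
    · have h := lie_mem (𝒟.E 0) (𝒟.E n)
      rw [𝒟.bracket_EE 0 n] at h
      norm_num at h
      exact DSV.mem_of_smul_mem I (Int.cast_ne_zero.mpr hn) h
  -- M's
  have hM : ∀ n : ℤ, 𝒟.M n ∈ I := by
    intro n
    by_cases hn : n - t + 2 = 0
    · have h := lie_mem (𝒟.Y 0) (𝒟.Y (n - t))
      rw [𝒟.bracket_YY 0 (n - t)] at h
      have hidx : (0 : ℤ) + (n - t) + t = n := by ring
      rw [hidx] at h
      refine DSV.mem_of_smul_mem I ?_ h
      have hnt : n - t = -2 := by omega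
      rw [hnt]; norm_num
    · have h := lie_mem (𝒟.Y (-1)) (𝒟.Y (n - t + 1))
      rw [𝒟.bracket_YY (-1) (n - t + 1)] at h
      have hidx : (-1 : ℤ) + (n - t + 1) + t = n := by ring
      rw [hidx] at h
      refine DSV.mem_of_smul_mem I ?_ h
      intro hc
      apply hn
      have : ((n - t + 1 : ℤ) : ℂ) = ((-1 : ℤ) : ℂ) := by linear_combination hc
      have := Int.cast_injective this
      omega
  -- Y's
  have hY : ∀ n : ℤ, 𝒟.Y n ∈ I := by
    intro n
    have key : ∀ k : ℤ, (((n - k : ℤ) : ℂ) + s - ((lam + 1) / 2) * k + mu) ≠ 0 →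
        𝒟.Y n ∈ I := by
      intro k hk
      have h := lie_mem (𝒟.E k) (𝒟.Y (n - k))
      rw [𝒟.bracket_EY k (n - k)] at h
      have hidx : k + (n - k) = n := by ring
      rw [hidx] at h
      exact DSV.mem_of_smul_mem I hk h
    by_cases hlam : lam = -3
    · have hmu : ∀ r : ℤ, mu ≠ s + r := fun r hr => hcond ⟨hlam, r, hr⟩
      apply key 0
      intro hc
      apply hmu (-(t + n))
      have ht := 𝒟.ht
      push_cast at hc ht ⊢
      linear_combination hc + ht
    · by_cases h0 : ((n : ℂ) + s + mu) = 0
      · apply key 1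
        intro hc
        apply hlam
        push_cast at hc
        linear_combination -2 * hc + 2 * h0
      · apply key 0
        intro hc
        apply h0
        push_cast at hc
        linear_combination hc
  have hall : ∀ i : ℤ ⊕ ℤ ⊕ ℤ, 𝒟.basis i ∈ I := by
    rintro (n | n | n)
    · rw [𝒟.basis_inl]; exact hE n
    · rw [𝒟.basis_inr_inl]; exact hM n
    · rw [𝒟.basis_inr_inr]; exact hY n
  have hspan : Submodule.span ℂ (Set.range 𝒟.basis) ≤ I.toSubmodule :=
    Submodule.span_le.mpr (by rintro _ ⟨i, rfl⟩; exact hall i)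
  rw [Module.Basis.span_eq] at hspan
  rw [eq_top_iff]
  intro x _
  exact hspan Submodule.mem_top
end

section
/- Fix λ, μ ∈ ℂ and s ∈ {0, 1/2}. In the deformative Schrödinger–Virasoro Lie algebra 𝓛 = 𝓛(λ,μ,s), the centralizer of the derived subalgebra coincides with the center: C_𝓛([𝓛,𝓛]) = Z(𝓛). -/
section Aux

variable {V : Type*} [LieRing V] [LieAlgebra ℂ V]

lemma repr_lie_eq {ι : Type*} (b : Module.Basis ι ℂ V) (σ : ι → ι) (hσ : Function.Injective σ)
    (c : ι → ℂ) (u : V) (hb : ∀ i, ⁅u, b i⁆ = c i • b (σ i)) (v : V) (j : ι) :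
    b.repr ⁅u, v⁆ (σ j) = c j * b.repr v j := by
  classical
  have hv : v = ∑ i ∈ (b.repr v).support, b.repr v i • b i := by
    conv_lhs => rw [← b.linearCombination_repr v]
    rw [Finsupp.linearCombination_apply, Finsupp.sum]
  have h1 : ⁅u, v⁆ = ∑ i ∈ (b.repr v).support, (b.repr v i * c i) • b (σ i) := by
    have h2 : ⁅u, v⁆ = (LieModule.toEnd ℂ V V u) v := rfl
    rw [h2]
    conv_lhs => rw [hv]
    rw [map_sum]
    refine Finset.sum_congr rfl fun i _ => ?_
    have h3 : (LieModule.toEnd ℂ V V u) (b.repr v i • b i) = b.repr v i • ⁅u, b i⁆ := by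
      simp [LieModule.toEnd_apply_apply]
    rw [h3, hb, smul_smul]
  rw [h1, map_sum]
  simp only [map_smul, b.repr_self]
  rw [Finsupp.finset_sum_apply]
  simp only [Finsupp.smul_apply, Finsupp.single_apply, hσ.eq_iff, smul_eq_mul, mul_ite,
    mul_one, mul_zero]
  rw [Finset.sum_ite_eq' (b.repr v).support j (fun i => b.repr v i * c i)]
  by_cases hj : j ∈ (b.repr v).support
  · simp [hj, mul_comm]
  · simp [hj, Finsupp.notMem_support_iff.mp hj]

/-- index shift for ad(E n) -/
def dsvσE (n : ℤ) : ℤ ⊕ ℤ ⊕ ℤ → ℤ ⊕ ℤ ⊕ ℤ :=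
  Sum.elim (fun i => .inl (n + i))
    (Sum.elim (fun i => .inr (.inl (n + i))) (fun i => .inr (.inr (n + i))))

lemma dsvσE_inj (n : ℤ) : Function.Injective (dsvσE n) := by
  rintro (i | i | i) (j | j | j) h <;> simp [dsvσE] at h ⊢ <;> omega

/-- coefficients for ad(E n) -/
noncomputable def dsvcE (lam mu s : ℂ) (n : ℤ) : ℤ ⊕ ℤ ⊕ ℤ → ℂ :=
  Sum.elim (fun i => (i : ℂ) - n)
    (Sum.elim (fun i => (i : ℂ) - lam * n + 2 * mu)
      (fun i => (i : ℂ) + s - ((lam + 1) / 2) * n + mu))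

/-- index shift for ad(Y m) -/
def dsvσY (m t : ℤ) : ℤ ⊕ ℤ ⊕ ℤ → ℤ ⊕ ℤ ⊕ ℤ :=
  Sum.elim (fun i => .inr (.inr (i + m)))
    (Sum.elim (fun i => .inl i) (fun i => .inr (.inl (m + i + t))))

lemma dsvσY_inj (m t : ℤ) : Function.Injective (dsvσY m t) := by
  rintro (i | i | i) (j | j | j) h <;> simp [dsvσY] at h ⊢ <;> omega

/-- coefficients for ad(Y m) -/
noncomputable def dsvcY (lam mu s : ℂ) (m : ℤ) : ℤ ⊕ ℤ ⊕ ℤ → ℂ :=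
  Sum.elim (fun i => -((m : ℂ) + s - ((lam + 1) / 2) * i + mu))
    (Sum.elim (fun _ => 0) (fun i => (i : ℂ) - m))

end Aux

section Aux2

variable {lam mu s : ℂ} {t : ℤ} {V : Type*} [LieRing V] [LieAlgebra ℂ V]

lemma dsv_hbE (𝒟 : DSV lam mu s t V) (n : ℤ) (j : ℤ ⊕ ℤ ⊕ ℤ) :
    ⁅𝒟.E n, 𝒟.basis j⁆ = dsvcE lam mu s n j • 𝒟.basis (dsvσE n j) := by
  rcases j with i | i | i <;>
    simp [dsvcE, dsvσE, 𝒟.basis_inl, 𝒟.basis_inr_inl, 𝒟.basis_inr_inr,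
      𝒟.bracket_EE, 𝒟.bracket_EM, 𝒟.bracket_EY]

lemma dsv_hbY (𝒟 : DSV lam mu s t V) (m : ℤ) (j : ℤ ⊕ ℤ ⊕ ℤ) :
    ⁅𝒟.Y m, 𝒟.basis j⁆ = dsvcY lam mu s m j • 𝒟.basis (dsvσY m t j) := by
  rcases j with i | i | i
  · rw [𝒟.basis_inl, ← lie_skew, 𝒟.bracket_EY]
    simp only [dsvcY, dsvσY, Sum.elim_inl, 𝒟.basis_inr_inr, neg_smul]
  · rw [𝒟.basis_inr_inl, ← lie_skew, 𝒟.bracket_MY]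
    simp [dsvcY, dsvσY]
  · rw [𝒟.basis_inr_inr, 𝒟.bracket_YY]
    simp [dsvcY, dsvσY, 𝒟.basis_inr_inl]

end Aux2

/-- In `𝓛(λ, μ, s)`, the centralizer of the derived subalgebra coincides with
the center. -/
theorem DSV_centralizer_derived_eq_center
    (lam mu s : ℂ) (t : ℤ) (V : Type*) [LieRing V] [LieAlgebra ℂ V]
    (𝒟 : DSV lam mu s t V) (hs : s = 0 ∨ s = 1 / 2) :
    ∀ x : V,
      (∀ y ∈ (⁅(⊤ : LieIdeal ℂ V), (⊤ : LieIdeal ℂ V)⁆ : LieIdeal ℂ V), ⁅x, y⁆ = 0)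
        ↔ x ∈ LieAlgebra.center ℂ V := by
  intro x
  constructor
  · intro h
    have hbr : ∀ a b : V, ⁅x, ⁅a, b⁆⁆ = 0 := fun a b =>
      h _ (LieSubmodule.lie_mem_lie (LieSubmodule.mem_top _) (LieSubmodule.mem_top _))
    have key : ∀ (cc : ℂ) (w : V), cc ≠ 0 → ⁅x, cc • w⁆ = 0 → ⁅x, w⁆ = 0 := by
      intro cc w hcc hcw
      rw [lie_smul, smul_eq_zero] at hcw
      tauto
    -- x commutes with all E k
    have hxE : ∀ k : ℤ, ⁅x, 𝒟.E k⁆ = 0 := by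
      intro k
      rcases eq_or_ne k 0 with rfl | hk
      · have h0 := hbr (𝒟.E (-1)) (𝒟.E 1)
        rw [𝒟.bracket_EE] at h0
        have hc : ((1 : ℤ) : ℂ) - ((-1 : ℤ) : ℂ) = 2 := by norm_num
        have hidx : (-1 : ℤ) + 1 = 0 := by norm_num
        rw [hc, hidx] at h0
        exact key 2 _ two_ne_zero h0
      · have h0 := hbr (𝒟.E 0) (𝒟.E k)
        rw [𝒟.bracket_EE] at h0
        simp only [zero_add, Int.cast_zero, sub_zero] at h0
        exact key _ _ (Int.cast_ne_zero.mpr hk) h0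
    -- x commutes with all M k
    have hxM : ∀ k : ℤ, ⁅x, 𝒟.M k⁆ = 0 := by
      intro k
      rcases eq_or_ne k t with heq | hk
      · subst heq
        have h0 := hbr (𝒟.Y (-1)) (𝒟.Y 1)
        rw [𝒟.bracket_YY] at h0
        have hidx : (-1 : ℤ) + 1 + k = k := by omega
        have hc : ((1 : ℤ) : ℂ) - ((-1 : ℤ) : ℂ) = 2 := by norm_num
        rw [hidx, hc] at h0
        exact key 2 _ two_ne_zero h0
      · have h0 := hbr (𝒟.Y 0) (𝒟.Y (k - t))
        rw [𝒟.bracket_YY] at h0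
        have hidx : (0 : ℤ) + (k - t) + t = k := by omega
        rw [hidx] at h0
        simp only [Int.cast_zero, sub_zero] at h0
        exact key _ _ (Int.cast_ne_zero.mpr (sub_ne_zero.mpr hk)) h0
    -- coefficient constraints from commuting with E n
    have hE_repr : ∀ (n : ℤ) (j : ℤ ⊕ ℤ ⊕ ℤ),
        dsvcE lam mu s n j * 𝒟.basis.repr x j = 0 := by
      intro n j
      have h0 : ⁅𝒟.E n, x⁆ = 0 := by rw [← lie_skew, hxE, neg_zero]
      have h1 := repr_lie_eq 𝒟.basis (dsvσE n) (dsvσE_inj n) (dsvcE lam mu s n) (𝒟.E n)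
        (dsv_hbE 𝒟 n) x j
      rw [h0] at h1
      simpa using h1.symm
    -- E-components of x vanish
    have hfE : ∀ i : ℤ, 𝒟.basis.repr x (Sum.inl i) = 0 := by
      intro i
      have h1 := hE_repr (i + 1) (Sum.inl i)
      simp only [dsvcE, Sum.elim_inl] at h1
      have hc : (i : ℂ) - ((i + 1 : ℤ) : ℂ) = -1 := by push_cast; ring
      rw [hc] at h1
      simpa using h1
    -- Y-components of x vanish
    have hfY : ∀ i : ℤ, 𝒟.basis.repr x (Sum.inr (Sum.inr i)) = 0 := by
      intro i
      by_contra hne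
      have hcoef : ∀ n : ℤ, (i : ℂ) + s - ((lam + 1) / 2) * n + mu = 0 := by
        intro n
        have h1 := hE_repr n (Sum.inr (Sum.inr i))
        simp only [dsvcE, Sum.elim_inr, Sum.elim_inl] at h1
        rcases mul_eq_zero.mp h1 with h2 | h2
        · exact h2
        · exact absurd h2 hne
      have h0 := hcoef 0
      have h2 := hcoef 2
      simp only [Int.cast_zero, mul_zero, sub_zero, Int.cast_two] at h0 h2
      have hY1 : ⁅x, 𝒟.Y (i + 1)⁆ = 0 := by
        have hb2 := hbr (𝒟.E 0) (𝒟.Y (i + 1))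
        rw [𝒟.bracket_EY] at hb2
        have hidx : (0 : ℤ) + (i + 1) = i + 1 := by omega
        rw [hidx] at hb2
        have hcc : ((i + 1 : ℤ) : ℂ) + s - ((lam + 1) / 2) * ((0 : ℤ) : ℂ) + mu = 1 := by
          push_cast
          linear_combination h0
        rw [hcc, one_smul] at hb2
        exact hb2
      have h0' : ⁅𝒟.Y (i + 1), x⁆ = 0 := by rw [← lie_skew, hY1, neg_zero]
      have h1 := repr_lie_eq 𝒟.basis (dsvσY (i + 1) t) (dsvσY_inj (i + 1) t)
        (dsvcY lam mu s (i + 1)) (𝒟.Y (i + 1)) (dsv_hbY 𝒟 (i + 1)) x (Sum.inr (Sum.inr i))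
      rw [h0'] at h1
      simp only [map_zero, Finsupp.coe_zero, Pi.zero_apply, dsvcY, Sum.elim_inr] at h1
      have hc : (i : ℂ) - ((i + 1 : ℤ) : ℂ) = -1 := by push_cast; ring
      rw [hc] at h1
      apply hne
      have := h1.symm
      simpa using this
    -- brackets with Y m vanish
    have hxY : ∀ m : ℤ, ⁅𝒟.Y m, x⁆ = 0 := by
      intro m
      have hrepr : 𝒟.basis.repr ⁅𝒟.Y m, x⁆ = 0 := by
        ext k
        have main : ∀ j : ℤ ⊕ ℤ ⊕ ℤ, 𝒟.basis.repr ⁅𝒟.Y m, x⁆ (dsvσY m t j) =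
            dsvcY lam mu s m j * 𝒟.basis.repr x j :=
          repr_lie_eq 𝒟.basis (dsvσY m t) (dsvσY_inj m t) (dsvcY lam mu s m) (𝒟.Y m)
            (dsv_hbY 𝒟 m) x
        rcases k with k | k | k
        · have h1 := main (Sum.inr (Sum.inl k))
          simp only [dsvσY, dsvcY, Sum.elim_inr, Sum.elim_inl, zero_mul] at h1
          simpa using h1
        · have h1 := main (Sum.inr (Sum.inr (k - m - t)))
          simp only [dsvσY, dsvcY, Sum.elim_inr] at h1
          have hidx : m + (k - m - t) + t = k := by omega
          rw [hidx, hfY] at h1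
          simpa using h1
        · have h1 := main (Sum.inl (k - m))
          simp only [dsvσY, dsvcY, Sum.elim_inl] at h1
          have hidx : k - m + m = k := by omega
          rw [hidx, hfE] at h1
          simpa using h1
      exact (LinearEquiv.map_eq_zero_iff _).mp hrepr
    -- conclude x is central
    have hcentral : ∀ y : V, ⁅y, x⁆ = 0 := by
      have φdef : ∀ y : V, (⟨⟨fun y => ⁅y, x⁆, fun a b => add_lie a b x⟩,
          fun c a => smul_lie c a x⟩ : V →ₗ[ℂ] V) y = ⁅y, x⁆ := fun _ => rfl
      have hφ : (⟨⟨fun y => ⁅y, x⁆, fun a b => add_lie a b x⟩,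
          fun c a => smul_lie c a x⟩ : V →ₗ[ℂ] V) = 0 := by
        apply Module.Basis.ext 𝒟.basis
        rintro (n | n | n)
        · rw [𝒟.basis_inl]
          show ⁅𝒟.E n, x⁆ = 0
          rw [← lie_skew, hxE, neg_zero]
        · rw [𝒟.basis_inr_inl]
          show ⁅𝒟.M n, x⁆ = 0
          rw [← lie_skew, hxM, neg_zero]
        · rw [𝒟.basis_inr_inr]
          show ⁅𝒟.Y n, x⁆ = 0
          exact hxY n
      intro y
      rw [← φdef y, hφ]
      rfl
    exact (LieModule.mem_maxTrivSubmodule ℂ V V x).mpr hcentral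
  · intro hx y _
    have := (LieModule.mem_maxTrivSubmodule ℂ V V x).mp hx y
    rw [← lie_skew, this, neg_zero]
end

section
/- Fix λ, μ ∈ ℂ and s ∈ {0, 1/2} with λ = 1 and 2(μ − s) ∈ ℤ. Then the map φ₀ is a skew-symmetric biderivation of the deformative Schrödinger–Virasoro Lie algebra 𝓛(λ,μ,s). -/
private lemma basis_forall {R M ι : Type*} [Semiring R] [AddCommMonoid M] [Module R M]
    (b : Module.Basis ι R M) {P : M → Prop}
    (hb : ∀ i, P (b i)) (h0 : P 0)
    (hadd : ∀ x y, P x → P y → P (x + y))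
    (hsmul : ∀ (c : R) x, P x → P (c • x)) : ∀ x, P x := by
  intro x
  have hx : x ∈ Submodule.span R (Set.range b) := by rw [b.span_eq]; trivial
  exact Submodule.span_induction (p := fun x _ => P x)
    (fun x hx => by obtain ⟨i, rfl⟩ := hx; exact hb i) h0
    (fun x y _ _ => hadd x y) (fun c x _ => hsmul c x) hx

/-- For `λ = 1` and `2(μ - s) ∈ ℤ`, the bilinear map `φ₀` with
`φ₀(L_n, L_m) = (m - n) M_{n+m-2μ}` and all other pairs of basis elements
mapping to `0` is a skew-symmetric biderivation of `𝓛(λ, μ, s)`.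
Here `p ∈ ℤ` satisfies `(p : ℂ) = 2μ`. -/
theorem phi0_is_skew_biderivation
    (lam mu s : ℂ) (t : ℤ) (V : Type*) [LieRing V] [LieAlgebra ℂ V]
    (𝒟 : DSV lam mu s t V) (hs : s = 0 ∨ s = 1 / 2)
    (hlam : lam = 1) (hmu : ∃ r : ℤ, (r : ℂ) = 2 * (mu - s))
    (p : ℤ) (hp : (p : ℂ) = 2 * mu)
    (φ₀ : V →ₗ[ℂ] V →ₗ[ℂ] V)
    (hφ₀LL : ∀ n m : ℤ, φ₀ (𝒟.E n) (𝒟.E m) = ((m : ℂ) - n) • 𝒟.M (n + m - p))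
    (hφ₀LM : ∀ n m : ℤ, φ₀ (𝒟.E n) (𝒟.M m) = 0)
    (hφ₀LY : ∀ n m : ℤ, φ₀ (𝒟.E n) (𝒟.Y m) = 0)
    (hφ₀ML : ∀ n m : ℤ, φ₀ (𝒟.M n) (𝒟.E m) = 0)
    (hφ₀MM : ∀ n m : ℤ, φ₀ (𝒟.M n) (𝒟.M m) = 0)
    (hφ₀MY : ∀ n m : ℤ, φ₀ (𝒟.M n) (𝒟.Y m) = 0)
    (hφ₀YL : ∀ n m : ℤ, φ₀ (𝒟.Y n) (𝒟.E m) = 0)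
    (hφ₀YM : ∀ n m : ℤ, φ₀ (𝒟.Y n) (𝒟.M m) = 0)
    (hφ₀YY : ∀ n m : ℤ, φ₀ (𝒟.Y n) (𝒟.Y m) = 0) :
    (∀ x y : V, φ₀ x y = - φ₀ y x) ∧
    (∀ x y z : V, φ₀ ⁅x, y⁆ z = ⁅x, φ₀ y z⁆ + ⁅φ₀ x z, y⁆) ∧
    (∀ x y z : V, φ₀ x ⁅y, z⁆ = ⁅φ₀ x y, z⁆ + ⁅y, φ₀ x z⁆) := by
  subst hlam
  -- reversed brackets
  have bME : ∀ n m : ℤ, ⁅𝒟.M n, 𝒟.E m⁆ = (-((n : ℂ) - 1 * m + 2 * mu)) • 𝒟.M (m + n) := by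
    intro n m; rw [← lie_skew, 𝒟.bracket_EM, neg_smul]
  have bYE : ∀ n m : ℤ,
      ⁅𝒟.Y n, 𝒟.E m⁆ = (-((n : ℂ) + s - ((1 + 1) / 2) * m + mu)) • 𝒟.Y (m + n) := by
    intro n m; rw [← lie_skew, 𝒟.bracket_EY, neg_smul]
  have bYM : ∀ n m : ℤ, ⁅𝒟.Y n, 𝒟.M m⁆ = 0 := by
    intro n m; rw [← lie_skew, 𝒟.bracket_MY, neg_zero]
  refine ⟨?_, ?_, ?_⟩
  · -- skew-symmetry
    have base : ∀ i j, φ₀ (𝒟.basis i) (𝒟.basis j) = - φ₀ (𝒟.basis j) (𝒟.basis i) := by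
      rintro (n | n | n) (m | m | m) <;>
        simp only [𝒟.basis_inl, 𝒟.basis_inr_inl, 𝒟.basis_inr_inr,
          hφ₀LL, hφ₀LM, hφ₀LY, hφ₀ML, hφ₀MM, hφ₀MY, hφ₀YL, hφ₀YM, hφ₀YY, neg_zero]
      rw [show m + n - p = n + m - p by ring, ← neg_smul]
      congr 1; ring
    refine basis_forall 𝒟.basis (P := fun x => ∀ y : V, φ₀ x y = - φ₀ y x)
      (fun i => ?_) (fun y => by simp) (fun x x' hx hx' y => ?_) (fun c x hx y => ?_)
    · refine basis_forall 𝒟.basis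
        (P := fun y => φ₀ (𝒟.basis i) y = - φ₀ y (𝒟.basis i))
        (base i) (by simp) (fun y y' hy hy' => ?_) (fun c y hy => ?_)
      · simp only [map_add, LinearMap.add_apply, hy, hy', neg_add]
      · simp only [map_smul, LinearMap.smul_apply, hy, smul_neg]
    · simp only [map_add, LinearMap.add_apply, hx y, hx' y, neg_add]
    · simp only [map_smul, LinearMap.smul_apply, hx y, smul_neg]
  · -- first biderivation identity
    have base : ∀ i j k, φ₀ ⁅𝒟.basis i, 𝒟.basis j⁆ (𝒟.basis k)
        = ⁅𝒟.basis i, φ₀ (𝒟.basis j) (𝒟.basis k)⁆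
          + ⁅φ₀ (𝒟.basis i) (𝒟.basis k), 𝒟.basis j⁆ := by
      rintro (n | n | n) (m | m | m) (k | k | k) <;>
        simp only [𝒟.basis_inl, 𝒟.basis_inr_inl, 𝒟.basis_inr_inr,
          𝒟.bracket_EE, 𝒟.bracket_EM, 𝒟.bracket_EY, 𝒟.bracket_YY, 𝒟.bracket_MM,
          𝒟.bracket_MY, bME, bYE, bYM,
          map_smul, LinearMap.smul_apply, map_zero, LinearMap.zero_apply, map_neg, LinearMap.neg_apply,
          hφ₀LL, hφ₀LM, hφ₀LY, hφ₀ML, hφ₀MM, hφ₀MY, hφ₀YL, hφ₀YM, hφ₀YY,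
          smul_smul, smul_zero, lie_zero, zero_lie, lie_smul, smul_lie,
          add_zero, zero_add, neg_smul, neg_zero, neg_neg, smul_neg]
      rw [show n + (m + k - p) = n + m + k - p by ring,
        show m + (n + k - p) = n + m + k - p by ring]
      match_scalars
      push_cast
      rw [hp]
      ring
    refine basis_forall 𝒟.basis
      (P := fun x => ∀ y z : V, φ₀ ⁅x, y⁆ z = ⁅x, φ₀ y z⁆ + ⁅φ₀ x z, y⁆)
      (fun i => ?_) (fun y z => by simp) (fun x x' hx hx' y z => ?_)
      (fun c x hx y z => ?_)
    · refine basis_forall 𝒟.basis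
        (P := fun y => ∀ z : V, φ₀ ⁅𝒟.basis i, y⁆ z
          = ⁅𝒟.basis i, φ₀ y z⁆ + ⁅φ₀ (𝒟.basis i) z, y⁆)
        (fun j => ?_) (fun z => by simp) (fun y y' hy hy' z => ?_)
        (fun c y hy z => ?_)
      · refine basis_forall 𝒟.basis
          (P := fun z => φ₀ ⁅𝒟.basis i, 𝒟.basis j⁆ z
            = ⁅𝒟.basis i, φ₀ (𝒟.basis j) z⁆ + ⁅φ₀ (𝒟.basis i) z, 𝒟.basis j⁆)
          (base i j) (by simp) (fun z z' hz hz' => ?_) (fun c z hz => ?_)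
        · simp only [map_add, lie_add, add_lie, LinearMap.add_apply, hz, hz']
          abel
        · simp only [map_smul, lie_smul, smul_lie, LinearMap.smul_apply, hz, smul_add]
      · simp only [lie_add, add_lie, map_add, LinearMap.add_apply, hy z, hy' z]
        abel
      · simp only [lie_smul, smul_lie, map_smul, LinearMap.smul_apply, hy z, smul_add]
    · simp only [add_lie, lie_add, map_add, LinearMap.add_apply, hx y z, hx' y z]
      abel
    · simp only [smul_lie, lie_smul, map_smul, LinearMap.smul_apply, hx y z, smul_add]
  · -- second biderivation identity
    have base : ∀ i j k, φ₀ (𝒟.basis i) ⁅𝒟.basis j, 𝒟.basis k⁆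
        = ⁅φ₀ (𝒟.basis i) (𝒟.basis j), 𝒟.basis k⁆
          + ⁅𝒟.basis j, φ₀ (𝒟.basis i) (𝒟.basis k)⁆ := by
      rintro (n | n | n) (m | m | m) (k | k | k) <;>
        simp only [𝒟.basis_inl, 𝒟.basis_inr_inl, 𝒟.basis_inr_inr,
          𝒟.bracket_EE, 𝒟.bracket_EM, 𝒟.bracket_EY, 𝒟.bracket_YY, 𝒟.bracket_MM,
          𝒟.bracket_MY, bME, bYE, bYM,
          map_smul, LinearMap.smul_apply, map_zero, LinearMap.zero_apply, map_neg, LinearMap.neg_apply,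
          hφ₀LL, hφ₀LM, hφ₀LY, hφ₀ML, hφ₀MM, hφ₀MY, hφ₀YL, hφ₀YM, hφ₀YY,
          smul_smul, smul_zero, lie_zero, zero_lie, lie_smul, smul_lie,
          add_zero, zero_add, neg_smul, neg_zero, neg_neg, smul_neg]
      rw [show k + (n + m - p) = n + (m + k) - p by ring,
        show m + (n + k - p) = n + (m + k) - p by ring]
      match_scalars
      push_cast
      rw [hp]
      ring
    refine basis_forall 𝒟.basis
      (P := fun x => ∀ y z : V, φ₀ x ⁅y, z⁆ = ⁅φ₀ x y, z⁆ + ⁅y, φ₀ x z⁆)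
      (fun i => ?_) (fun y z => by simp) (fun x x' hx hx' y z => ?_)
      (fun c x hx y z => ?_)
    · refine basis_forall 𝒟.basis
        (P := fun y => ∀ z : V, φ₀ (𝒟.basis i) ⁅y, z⁆
          = ⁅φ₀ (𝒟.basis i) y, z⁆ + ⁅y, φ₀ (𝒟.basis i) z⁆)
        (fun j => ?_) (fun z => by simp) (fun y y' hy hy' z => ?_)
        (fun c y hy z => ?_)
      · refine basis_forall 𝒟.basis
          (P := fun z => φ₀ (𝒟.basis i) ⁅𝒟.basis j, z⁆
            = ⁅φ₀ (𝒟.basis i) (𝒟.basis j), z⁆ + ⁅𝒟.basis j, φ₀ (𝒟.basis i) z⁆)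
          (base i j) (by simp) (fun z z' hz hz' => ?_) (fun c z hz => ?_)
        · simp only [map_add, lie_add, add_lie, LinearMap.add_apply, hz, hz']
          abel
        · simp only [map_smul, lie_smul, smul_lie, LinearMap.smul_apply, hz, smul_add]
      · simp only [lie_add, add_lie, map_add, LinearMap.add_apply, hy z, hy' z]
        abel
      · simp only [lie_smul, smul_lie, map_smul, LinearMap.smul_apply, hy z, smul_add]
    · simp only [add_lie, lie_add, map_add, LinearMap.add_apply, hx y z, hx' y z]
      abel
    · simp only [smul_lie, lie_smul, map_smul, LinearMap.smul_apply, hx y z, smul_add]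
end

section
/- Fix λ, μ ∈ ℂ and s ∈ {0, 1/2} with λ = 1 and 2(μ − s) ∈ ℤ. Then the skew-symmetric biderivation φ₀ of 𝓛(λ,μ,s) is not inner: there is no c ∈ ℂ with φ₀(x,y) = c·[x,y] for all x, y ∈ 𝓛(λ,μ,s). -/
/-- For `λ = 1` and `2(μ - s) ∈ ℤ`, the skew-symmetric biderivation `φ₀` of
`𝓛(λ, μ, s)` is not inner: there is no `c ∈ ℂ` with `φ₀ x y = c • ⁅x, y⁆`
for all `x, y`. -/
theorem phi0_not_inner
    (lam mu s : ℂ) (t : ℤ) (V : Type*) [LieRing V] [LieAlgebra ℂ V]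
    (𝒟 : DSV lam mu s t V) (hs : s = 0 ∨ s = 1 / 2)
    (hlam : lam = 1) (hmu : ∃ r : ℤ, (r : ℂ) = 2 * (mu - s))
    (p : ℤ) (hp : (p : ℂ) = 2 * mu)
    (φ₀ : V →ₗ[ℂ] V →ₗ[ℂ] V)
    (hφ₀LL : ∀ n m : ℤ, φ₀ (𝒟.E n) (𝒟.E m) = ((m : ℂ) - n) • 𝒟.M (n + m - p))
    (hφ₀LM : ∀ n m : ℤ, φ₀ (𝒟.E n) (𝒟.M m) = 0)
    (hφ₀LY : ∀ n m : ℤ, φ₀ (𝒟.E n) (𝒟.Y m) = 0)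
    (hφ₀ML : ∀ n m : ℤ, φ₀ (𝒟.M n) (𝒟.E m) = 0)
    (hφ₀MM : ∀ n m : ℤ, φ₀ (𝒟.M n) (𝒟.M m) = 0)
    (hφ₀MY : ∀ n m : ℤ, φ₀ (𝒟.M n) (𝒟.Y m) = 0)
    (hφ₀YL : ∀ n m : ℤ, φ₀ (𝒟.Y n) (𝒟.E m) = 0)
    (hφ₀YM : ∀ n m : ℤ, φ₀ (𝒟.Y n) (𝒟.M m) = 0)
    (hφ₀YY : ∀ n m : ℤ, φ₀ (𝒟.Y n) (𝒟.Y m) = 0) :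
    ¬ ∃ c : ℂ, ∀ x y : V, φ₀ x y = c • ⁅x, y⁆ := by
  rintro ⟨c, hc⟩
  have h := hc (𝒟.E 0) (𝒟.E 1)
  rw [hφ₀LL, 𝒟.bracket_EE] at h
  simp only [Int.cast_one, Int.cast_zero, sub_zero, one_smul, zero_add] at h
  have h2 := congrArg (fun v => 𝒟.basis.repr v (Sum.inr (Sum.inl (1 - p)))) h
  rw [← 𝒟.basis_inr_inl, ← 𝒟.basis_inl] at h2
  simp [Module.Basis.repr_self, Finsupp.single_apply] at h2
end

section
/- Fix λ, μ ∈ ℂ and s ∈ {0, 1/2} with λ = 1 and μ − s ∈ ℤ. Then the map φ₁ is a skew-symmetric biderivation of the deformative Schrödinger–Virasoro Lie algebra 𝓛(λ,μ,s). -/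
lemma basisInd {V : Type*} [AddCommGroup V] [Module ℂ V] {ι : Type*}
    (b : Module.Basis ι ℂ V) {P : V → Prop}
    (hb : ∀ i, P (b i)) (h0 : P 0)
    (hadd : ∀ x y, P x → P y → P (x + y))
    (hsmul : ∀ (c : ℂ) (x : V), P x → P (c • x)) :
    ∀ v, P v := by
  intro v
  have hv : v ∈ Submodule.span ℂ (Set.range b) := by
    rw [b.span_eq]; exact Submodule.mem_top
  induction hv using Submodule.span_induction with
  | mem x hx => obtain ⟨i, rfl⟩ := hx; exact hb i
  | zero => exact h0
  | add x y _ _ hx hy => exact hadd x y hx hy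
  | smul c x _ hx => exact hsmul c x hx

/-- For `λ = 1` and `μ - s ∈ ℤ`, the bilinear map `φ₁` with
`φ₁(L_n, L_m) = (m - n) Y_{n+m-μ}`, `φ₁(L_n, Y_{m+s}) = (m + s - n + μ) M_{n+m+s-μ}`,
`φ₁(Y_{m+s}, L_n) = (n - m - s - μ) M_{n+m+s-μ}` and all other pairs of basis
elements mapping to `0` is a skew-symmetric biderivation of `𝓛(λ, μ, s)`.
Here `q ∈ ℤ` satisfies `(q : ℂ) = μ - s`. -/
theorem phi1_is_skew_biderivation
    (lam mu s : ℂ) (t : ℤ) (V : Type*) [LieRing V] [LieAlgebra ℂ V]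
    (𝒟 : DSV lam mu s t V) (hs : s = 0 ∨ s = 1 / 2)
    (hlam : lam = 1) (q : ℤ) (hq : (q : ℂ) = mu - s)
    (φ₁ : V →ₗ[ℂ] V →ₗ[ℂ] V)
    (hφ₁LL : ∀ n m : ℤ, φ₁ (𝒟.E n) (𝒟.E m) = ((m : ℂ) - n) • 𝒟.Y (n + m - q - t))
    (hφ₁LY : ∀ n m : ℤ,
      φ₁ (𝒟.E n) (𝒟.Y m) = ((m : ℂ) + s - n + mu) • 𝒟.M (n + m - q))
    (hφ₁YL : ∀ n m : ℤ,
      φ₁ (𝒟.Y m) (𝒟.E n) = ((n : ℂ) - m - s - mu) • 𝒟.M (n + m - q))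
    (hφ₁LM : ∀ n m : ℤ, φ₁ (𝒟.E n) (𝒟.M m) = 0)
    (hφ₁ML : ∀ n m : ℤ, φ₁ (𝒟.M n) (𝒟.E m) = 0)
    (hφ₁MM : ∀ n m : ℤ, φ₁ (𝒟.M n) (𝒟.M m) = 0)
    (hφ₁MY : ∀ n m : ℤ, φ₁ (𝒟.M n) (𝒟.Y m) = 0)
    (hφ₁YM : ∀ n m : ℤ, φ₁ (𝒟.Y n) (𝒟.M m) = 0)
    (hφ₁YY : ∀ n m : ℤ, φ₁ (𝒟.Y n) (𝒟.Y m) = 0) :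
    (∀ x y : V, φ₁ x y = - φ₁ y x) ∧
    (∀ x y z : V, φ₁ ⁅x, y⁆ z = ⁅x, φ₁ y z⁆ + ⁅φ₁ x z, y⁆) ∧
    (∀ x y z : V, φ₁ x ⁅y, z⁆ = ⁅φ₁ x y, z⁆ + ⁅y, φ₁ x z⁆) := by
  clear hs
  subst hlam
  have ht := 𝒟.ht
  have hbl := 𝒟.basis_inl
  have hbrl := 𝒟.basis_inr_inl
  have hbrr := 𝒟.basis_inr_inr
  have hEE := 𝒟.bracket_EE
  have hEM := 𝒟.bracket_EM
  have hEY := 𝒟.bracket_EY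
  have hYY := 𝒟.bracket_YY
  have hMM := 𝒟.bracket_MM
  have hMY := 𝒟.bracket_MY
  have hYE : ∀ n m : ℤ,
      ⁅𝒟.Y m, 𝒟.E n⁆ = -(((m : ℂ) + s - ((1 + 1) / 2) * n + mu) • 𝒟.Y (n + m)) := by
    intro n m; rw [← lie_skew, hEY]
  have hME : ∀ n m : ℤ, ⁅𝒟.M m, 𝒟.E n⁆ = -(((m : ℂ) - 1 * n + 2 * mu) • 𝒟.M (n + m)) := by
    intro n m; rw [← lie_skew, hEM]
  have hYM : ∀ n m : ℤ, ⁅𝒟.Y n, 𝒟.M m⁆ = 0 := by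
    intro n m; rw [← lie_skew, hMY, neg_zero]
  refine ⟨?_, ?_, ?_⟩
  · -- skew-symmetry
    refine basisInd 𝒟.basis (P := fun x => ∀ y : V, φ₁ x y = - φ₁ y x) ?_ ?_ ?_ ?_
    · intro i
      refine basisInd 𝒟.basis (P := fun y : V => φ₁ (𝒟.basis i) y = - φ₁ y (𝒟.basis i)) ?_ ?_ ?_ ?_
      · intro j
        rcases i with n | n | n <;> rcases j with m | m | m <;>
          simp only [hbl, hbrl, hbrr] <;>
          first
          | (simp [hφ₁LL, hφ₁LY, hφ₁YL, hφ₁LM, hφ₁ML, hφ₁MM, hφ₁MY, hφ₁YM, hφ₁YY]; done)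
          | (simp only [hφ₁LL, hφ₁LY, hφ₁YL]; push_cast; ring_nf; module)
      · simp
      · intro u v hu hv
        simp only [map_add, LinearMap.add_apply, hu, hv]; abel
      · intro c u hu
        simp only [map_smul, LinearMap.smul_apply, hu, smul_neg]
    · intro y; simp
    · intro u v hu hv y
      simp only [map_add, LinearMap.add_apply, hu, hv]; abel
    · intro c u hu y
      simp only [map_smul, LinearMap.smul_apply, hu, smul_neg]
  · -- first biderivation identity
    refine basisInd 𝒟.basis
      (P := fun x => ∀ y z : V, φ₁ ⁅x, y⁆ z = ⁅x, φ₁ y z⁆ + ⁅φ₁ x z, y⁆) ?_ ?_ ?_ ?_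
    · intro i
      refine basisInd 𝒟.basis
        (P := fun y : V => ∀ z : V, φ₁ ⁅𝒟.basis i, y⁆ z = ⁅𝒟.basis i, φ₁ y z⁆ + ⁅φ₁ (𝒟.basis i) z, y⁆)
        ?_ ?_ ?_ ?_
      · intro j
        refine basisInd 𝒟.basis
          (P := fun z : V => φ₁ ⁅𝒟.basis i, 𝒟.basis j⁆ z = ⁅𝒟.basis i, φ₁ (𝒟.basis j) z⁆ + ⁅φ₁ (𝒟.basis i) z, 𝒟.basis j⁆)
          ?_ ?_ ?_ ?_
        · intro k
          rcases i with n | n | n <;> rcases j with m | m | m <;> rcases k with p | p | p <;>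
            simp only [hbl, hbrl, hbrr] <;>
            first
            | (simp [hEE, hEM, hEY, hYY, hMM, hMY, hYE, hME, hYM,
                hφ₁LL, hφ₁LY, hφ₁YL, hφ₁LM, hφ₁ML, hφ₁MM, hφ₁MY, hφ₁YM, hφ₁YY,
                map_smul, LinearMap.smul_apply, lie_smul, smul_lie, smul_smul, map_neg,
                LinearMap.neg_apply, lie_neg, neg_lie]; done)
            | (simp only [hEE, hEM, hEY, hYY, hMM, hMY, hYE, hME, hYM,
                hφ₁LL, hφ₁LY, hφ₁YL, hφ₁LM, hφ₁ML, hφ₁MM, hφ₁MY, hφ₁YM, hφ₁YY,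
                map_smul, LinearMap.smul_apply, lie_smul, smul_lie, smul_smul, map_neg,
                LinearMap.neg_apply, lie_neg, neg_lie,
                smul_zero, zero_smul, neg_smul, smul_neg, lie_zero, zero_lie,
                add_zero, zero_add, neg_zero, neg_neg];
               push_cast [hq, ht]; ring_nf; module)
        · simp
        · intro u v hu hv
          simp only [map_add, LinearMap.add_apply, lie_add, add_lie, hu, hv]; abel
        · intro c u hu
          simp only [map_smul, LinearMap.smul_apply, lie_smul, smul_lie, hu, smul_add]
      · intro z; simp
      · intro u v hu hv z
        simp only [map_add, LinearMap.add_apply, lie_add, add_lie, hu, hv]; abel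
      · intro c u hu z
        simp only [map_smul, LinearMap.smul_apply, lie_smul, smul_lie, hu, smul_add]
    · intro y z; simp
    · intro u v hu hv y z
      simp only [map_add, LinearMap.add_apply, lie_add, add_lie, hu, hv]; abel
    · intro c u hu y z
      simp only [map_smul, LinearMap.smul_apply, lie_smul, smul_lie, hu, smul_add]
  · -- second biderivation identity
    refine basisInd 𝒟.basis
      (P := fun x => ∀ y z : V, φ₁ x ⁅y, z⁆ = ⁅φ₁ x y, z⁆ + ⁅y, φ₁ x z⁆) ?_ ?_ ?_ ?_
    · intro i
      refine basisInd 𝒟.basis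
        (P := fun y : V => ∀ z : V, φ₁ (𝒟.basis i) ⁅y, z⁆ = ⁅φ₁ (𝒟.basis i) y, z⁆ + ⁅y, φ₁ (𝒟.basis i) z⁆)
        ?_ ?_ ?_ ?_
      · intro j
        refine basisInd 𝒟.basis
          (P := fun z : V => φ₁ (𝒟.basis i) ⁅𝒟.basis j, z⁆ = ⁅φ₁ (𝒟.basis i) (𝒟.basis j), z⁆ + ⁅𝒟.basis j, φ₁ (𝒟.basis i) z⁆)
          ?_ ?_ ?_ ?_
        · intro k
          rcases i with n | n | n <;> rcases j with m | m | m <;> rcases k with p | p | p <;>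
            simp only [hbl, hbrl, hbrr] <;>
            first
            | (simp [hEE, hEM, hEY, hYY, hMM, hMY, hYE, hME, hYM,
                hφ₁LL, hφ₁LY, hφ₁YL, hφ₁LM, hφ₁ML, hφ₁MM, hφ₁MY, hφ₁YM, hφ₁YY,
                map_smul, LinearMap.smul_apply, lie_smul, smul_lie, smul_smul, map_neg,
                LinearMap.neg_apply, lie_neg, neg_lie]; done)
            | (simp only [hEE, hEM, hEY, hYY, hMM, hMY, hYE, hME, hYM,
                hφ₁LL, hφ₁LY, hφ₁YL, hφ₁LM, hφ₁ML, hφ₁MM, hφ₁MY, hφ₁YM, hφ₁YY,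
                map_smul, LinearMap.smul_apply, lie_smul, smul_lie, smul_smul, map_neg,
                LinearMap.neg_apply, lie_neg, neg_lie,
                smul_zero, zero_smul, neg_smul, smul_neg, lie_zero, zero_lie,
                add_zero, zero_add, neg_zero, neg_neg];
               push_cast [hq, ht]; ring_nf; module)
        · simp
        · intro u v hu hv
          simp only [map_add, LinearMap.add_apply, lie_add, add_lie, hu, hv]; abel
        · intro c u hu
          simp only [map_smul, LinearMap.smul_apply, lie_smul, smul_lie, hu, smul_add]
      · intro z; simp
      · intro u v hu hv z
        simp only [map_add, LinearMap.add_apply, lie_add, add_lie, hu, hv]; abel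
      · intro c u hu z
        simp only [map_smul, LinearMap.smul_apply, lie_smul, smul_lie, hu, smul_add]
    · intro y z; simp
    · intro u v hu hv y z
      simp only [map_add, LinearMap.add_apply, lie_add, add_lie, hu, hv]; abel
    · intro c u hu y z
      simp only [map_smul, LinearMap.smul_apply, lie_smul, smul_lie, hu, smul_add]
end

section
/- Fix λ, μ ∈ ℂ and s ∈ {0, 1/2} with λ = 1 and μ − s ∈ ℤ. Then the skew-symmetric biderivation φ₁ of 𝓛(λ,μ,s) is not inner: there is no c ∈ ℂ with φ₁(x,y) = c·[x,y] for all x, y ∈ 𝓛(λ,μ,s). -/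
/-- For `λ = 1` and `μ - s ∈ ℤ`, the skew-symmetric biderivation `φ₁` of
`𝓛(λ, μ, s)` is not inner: there is no `c ∈ ℂ` with `φ₁ x y = c • ⁅x, y⁆`
for all `x, y`. -/
theorem phi1_not_inner
    (lam mu s : ℂ) (t : ℤ) (V : Type*) [LieRing V] [LieAlgebra ℂ V]
    (𝒟 : DSV lam mu s t V) (hs : s = 0 ∨ s = 1 / 2)
    (hlam : lam = 1) (q : ℤ) (hq : (q : ℂ) = mu - s)
    (φ₁ : V →ₗ[ℂ] V →ₗ[ℂ] V)
    (hφ₁LL : ∀ n m : ℤ, φ₁ (𝒟.E n) (𝒟.E m) = ((m : ℂ) - n) • 𝒟.Y (n + m - q - t))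
    (hφ₁LY : ∀ n m : ℤ,
      φ₁ (𝒟.E n) (𝒟.Y m) = ((m : ℂ) + s - n + mu) • 𝒟.M (n + m - q))
    (hφ₁YL : ∀ n m : ℤ,
      φ₁ (𝒟.Y m) (𝒟.E n) = ((n : ℂ) - m - s - mu) • 𝒟.M (n + m - q))
    (hφ₁LM : ∀ n m : ℤ, φ₁ (𝒟.E n) (𝒟.M m) = 0)
    (hφ₁ML : ∀ n m : ℤ, φ₁ (𝒟.M n) (𝒟.E m) = 0)
    (hφ₁MM : ∀ n m : ℤ, φ₁ (𝒟.M n) (𝒟.M m) = 0)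
    (hφ₁MY : ∀ n m : ℤ, φ₁ (𝒟.M n) (𝒟.Y m) = 0)
    (hφ₁YM : ∀ n m : ℤ, φ₁ (𝒟.Y n) (𝒟.M m) = 0)
    (hφ₁YY : ∀ n m : ℤ, φ₁ (𝒟.Y n) (𝒟.Y m) = 0) :
    ¬ ∃ c : ℂ, ∀ x y : V, φ₁ x y = c • ⁅x, y⁆ := by
  rintro ⟨c, hc⟩
  have h := hc (𝒟.E 0) (𝒟.E 1)
  rw [hφ₁LL, 𝒟.bracket_EE] at h
  simp only [Int.cast_one, Int.cast_zero, sub_zero, one_smul, smul_smul, mul_one] at h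
  rw [zero_add] at h
  rw [← 𝒟.basis_inr_inr, ← 𝒟.basis_inl] at h
  have := congrArg (fun v => 𝒟.basis.repr v (Sum.inr (Sum.inr (1 - q - t)))) h
  simp [Module.Basis.repr_self, Finsupp.single_apply] at this
end

section
/- Fix λ, μ ∈ ℂ and s ∈ {0, 1/2} with λ = 1 and μ − s − 1/2 ∈ ℤ. Then every skew-symmetric biderivation φ of the deformative Schrödinger–Virasoro Lie algebra 𝓛(λ,μ,s) has the form φ(x,y) = α[x,y] + β·φ₀(x,y) for all x, y ∈ 𝓛(λ,μ,s), for some α, β ∈ ℂ. -/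
section KeyId
variable {V : Type*} [LieRing V] [LieAlgebra ℂ V]

lemma gammaI (φ : V →ₗ[ℂ] V →ₗ[ℂ] V)
    (hbd₁ : ∀ x y z : V, φ ⁅x, y⁆ z = ⁅x, φ y z⁆ + ⁅φ x z, y⁆)
    (hbd₂ : ∀ x y z : V, φ x ⁅y, z⁆ = ⁅φ x y, z⁆ + ⁅y, φ x z⁆)
    (x y u v : V) :
    ⁅φ x y, ⁅u, v⁆⁆ - ⁅⁅x, y⁆, φ u v⁆ = ⁅φ u y, ⁅x, v⁆⁆ - ⁅⁅u, y⁆, φ x v⁆ := by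
  have E1 : φ ⁅x,u⁆ ⁅y,v⁆ =
      ⁅x, ⁅φ u y, v⁆ + ⁅y, φ u v⁆⁆ + ⁅⁅φ x y, v⁆ + ⁅y, φ x v⁆, u⁆ := by
    rw [hbd₁ x u ⁅y,v⁆, hbd₂ u y v, hbd₂ x y v]
  have E2 : φ ⁅x,u⁆ ⁅y,v⁆ =
      ⁅⁅x, φ u y⁆ + ⁅φ x y, u⁆, v⁆ + ⁅y, ⁅x, φ u v⁆ + ⁅φ x v, u⁆⁆ := by
    rw [hbd₂ ⁅x,u⁆ y v, hbd₁ x u y, hbd₁ x u v]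
  set a := φ u y with ha
  set b := φ x y with hb
  set c := φ u v with hc
  set d := φ x v with hd
  have H : ⁅x, ⁅a, v⁆⁆ + ⁅x, ⁅y, c⁆⁆ + (-⁅u, ⁅b, v⁆⁆ + -⁅u, ⁅y, d⁆⁆) =
      (-⁅v, ⁅x, a⁆⁆ + -⁅v, ⁅b, u⁆⁆) + (⁅y, ⁅x, c⁆⁆ + ⁅y, ⁅d, u⁆⁆) := by
    have H0 := E1.symm.trans E2
    rw [lie_add x, add_lie (⁅b,v⁆), add_lie (⁅x,a⁆), lie_add y] at H0
    rw [← lie_skew ⁅b,v⁆ u, ← lie_skew ⁅y,d⁆ u, ← lie_skew ⁅x,a⁆ v, ← lie_skew ⁅b,u⁆ v] at H0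
    exact H0
  have g1 : ⁅b, ⁅u, v⁆⁆ = ⁅u, ⁅b, v⁆⁆ - ⁅v, ⁅b, u⁆⁆ := by
    rw [leibniz_lie b u v, ← lie_skew ⁅b,u⁆ v]; abel
  have g2 : ⁅(⁅x, y⁆ : V), c⁆ = ⁅x, ⁅y, c⁆⁆ - ⁅y, ⁅x, c⁆⁆ := lie_lie x y c
  have g3 : ⁅a, ⁅x, v⁆⁆ = ⁅x, ⁅a, v⁆⁆ + ⁅v, ⁅x, a⁆⁆ := by
    rw [leibniz_lie a x v, ← lie_skew a x, neg_lie, ← lie_skew ⁅x,a⁆ v]; abel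
  have g4 : ⁅(⁅u, y⁆ : V), d⁆ = ⁅u, ⁅y, d⁆⁆ + ⁅y, ⁅d, u⁆⁆ := by
    rw [lie_lie u y d, ← lie_skew d u, lie_neg]; abel
  rw [g1, g2, g3, g4]
  linear_combination (norm := abel) -H

lemma keyIdentity (φ : V →ₗ[ℂ] V →ₗ[ℂ] V)
    (hskew : ∀ x y : V, φ x y = - φ y x)
    (hbd₁ : ∀ x y z : V, φ ⁅x, y⁆ z = ⁅x, φ y z⁆ + ⁅φ x z, y⁆)
    (hbd₂ : ∀ x y z : V, φ x ⁅y, z⁆ = ⁅φ x y, z⁆ + ⁅y, φ x z⁆) :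
    ∀ x y u v : V, ⁅φ x y, ⁅u, v⁆⁆ = ⁅⁅x, y⁆, φ u v⁆ := by
  have I := gammaI φ hbd₁ hbd₂
  have III : ∀ x y u v : V,
      (⁅φ x y, ⁅u, v⁆⁆ - ⁅⁅x, y⁆, φ u v⁆ : V) =
        -(⁅φ y x, ⁅u, v⁆⁆ - ⁅⁅y, x⁆, φ u v⁆) := by
    intro x y u v
    rw [hskew x y, ← lie_skew x y, neg_lie, neg_lie]
    abel
  intro x y u v
  have chain : (⁅φ x y, ⁅u, v⁆⁆ - ⁅⁅x, y⁆, φ u v⁆ : V) =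
      -(⁅φ x y, ⁅u, v⁆⁆ - ⁅⁅x, y⁆, φ u v⁆) := by
    calc (⁅φ x y, ⁅u, v⁆⁆ - ⁅⁅x, y⁆, φ u v⁆ : V)
        = -(⁅φ y x, ⁅u, v⁆⁆ - ⁅⁅y, x⁆, φ u v⁆) := III x y u v
      _ = -(⁅φ u x, ⁅y, v⁆⁆ - ⁅⁅u, x⁆, φ y v⁆) := by rw [I y x u v]
      _ = (⁅φ x u, ⁅y, v⁆⁆ - ⁅⁅x, u⁆, φ y v⁆) := by rw [III u x y v]; abel
      _ = (⁅φ y u, ⁅x, v⁆⁆ - ⁅⁅y, u⁆, φ x v⁆) := I x u y v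
      _ = -(⁅φ u y, ⁅x, v⁆⁆ - ⁅⁅u, y⁆, φ x v⁆) := III y u x v
      _ = -(⁅φ x y, ⁅u, v⁆⁆ - ⁅⁅x, y⁆, φ u v⁆) := by rw [I u y x v]
  have h2 : (2 : ℂ) • (⁅φ x y, ⁅u, v⁆⁆ - ⁅⁅x, y⁆, φ u v⁆ : V) = 0 := by
    rw [two_smul]
    nth_rewrite 2 [chain]
    exact add_neg_cancel _
  have := (smul_eq_zero.mp h2).resolve_left (by norm_num)
  exact sub_eq_zero.mp this

end KeyId
section Repr
variable {V : Type*} [LieRing V] [LieAlgebra ℂ V] {mu s : ℂ} {t : ℤ} (𝒟 : DSV 1 mu s t V)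

abbrev ι3 := (ℤ ⊕ ℤ ⊕ ℤ)

lemma reprE (k : ℤ) (i : ι3) :
    𝒟.basis.repr (𝒟.E k) i = if (Sum.inl k : ι3) = i then 1 else 0 := by
  rw [← 𝒟.basis_inl, 𝒟.basis.repr_self, Finsupp.single_apply]

lemma reprM (k : ℤ) (i : ι3) :
    𝒟.basis.repr (𝒟.M k) i = if (Sum.inr (Sum.inl k) : ι3) = i then 1 else 0 := by
  rw [← 𝒟.basis_inr_inl, 𝒟.basis.repr_self, Finsupp.single_apply]

lemma reprY (k : ℤ) (i : ι3) :
    𝒟.basis.repr (𝒟.Y k) i = if (Sum.inr (Sum.inr k) : ι3) = i then 1 else 0 := by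
  rw [← 𝒟.basis_inr_inr, 𝒟.basis.repr_self, Finsupp.single_apply]

lemma reprLieE_e (n j : ℤ) (z : V) :
    𝒟.basis.repr ⁅𝒟.E n, z⁆ (Sum.inl j)
      = ((j : ℂ) - 2*n) * 𝒟.basis.repr z (Sum.inl (j-n)) := by
  have h : (Finsupp.lapply (Sum.inl j : ι3)) ∘ₗ (𝒟.basis.repr.toLinearMap)
        ∘ₗ ((LieAlgebra.ad ℂ V) (𝒟.E n))
      = ((j:ℂ) - 2*n) • ((Finsupp.lapply (Sum.inl (j-n) : ι3)) ∘ₗ 𝒟.basis.repr.toLinearMap) := by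
    apply 𝒟.basis.ext
    rintro (i | i | i) <;>
      simp only [LinearMap.comp_apply, LieAlgebra.ad_apply, LinearEquiv.coe_toLinearMap,
        LinearMap.smul_apply, Finsupp.lapply_apply, smul_eq_mul,
        𝒟.basis_inl, 𝒟.basis_inr_inl, 𝒟.basis_inr_inr,
        𝒟.bracket_EE, 𝒟.bracket_EM, 𝒟.bracket_EY, map_smul, Finsupp.smul_apply,
        reprE, reprM, reprY]
    · rcases eq_or_ne i (j - n) with rfl | hne
      · have c1 : (Sum.inl (n + (j - n)) : ι3) = Sum.inl j := by
          rw [show n + (j - n) = j from by omega]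
        rw [if_pos c1, if_pos rfl]; push_cast; ring
      · have c1 : (Sum.inl (n + i) : ι3) ≠ Sum.inl j := by simp; omega
        have c2 : (Sum.inl i : ι3) ≠ Sum.inl (j - n) := by simp; omega
        rw [if_neg c1, if_neg c2, mul_zero, mul_zero]
    · simp
    · simp
  exact LinearMap.congr_fun h z

lemma bracket_ME (n m : ℤ) :
    ⁅𝒟.M n, 𝒟.E m⁆ = (-((n : ℂ) - m + 2*mu)) • 𝒟.M (m + n) := by
  rw [← lie_skew, 𝒟.bracket_EM m n, one_mul, ← neg_smul]

lemma reprLieE_m (n j : ℤ) (z : V) :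
    𝒟.basis.repr ⁅𝒟.E n, z⁆ (Sum.inr (Sum.inl j))
      = ((j : ℂ) - 2*n + 2*mu) * 𝒟.basis.repr z (Sum.inr (Sum.inl (j-n))) := by
  have h : (Finsupp.lapply (Sum.inr (Sum.inl j) : ι3)) ∘ₗ (𝒟.basis.repr.toLinearMap)
        ∘ₗ ((LieAlgebra.ad ℂ V) (𝒟.E n))
      = ((j:ℂ) - 2*n + 2*mu) • ((Finsupp.lapply (Sum.inr (Sum.inl (j-n)) : ι3)) ∘ₗ 𝒟.basis.repr.toLinearMap) := by
    apply 𝒟.basis.ext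
    rintro (i | i | i) <;>
      simp only [LinearMap.comp_apply, LieAlgebra.ad_apply, LinearEquiv.coe_toLinearMap,
        LinearMap.smul_apply, Finsupp.lapply_apply, smul_eq_mul,
        𝒟.basis_inl, 𝒟.basis_inr_inl, 𝒟.basis_inr_inr,
        𝒟.bracket_EE, 𝒟.bracket_EM, 𝒟.bracket_EY, map_smul, Finsupp.smul_apply,
        reprE, reprM, reprY]
    · simp
    · rcases eq_or_ne i (j - n) with rfl | hne
      · have c1 : (Sum.inr (Sum.inl (n + (j - n))) : ι3) = Sum.inr (Sum.inl j) := by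
          rw [show n + (j - n) = j from by omega]
        rw [if_pos c1, if_pos rfl]; push_cast; ring
      · have c1 : (Sum.inr (Sum.inl (n + i)) : ι3) ≠ Sum.inr (Sum.inl j) := by simp; omega
        have c2 : (Sum.inr (Sum.inl i) : ι3) ≠ Sum.inr (Sum.inl (j - n)) := by simp; omega
        rw [if_neg c1, if_neg c2, mul_zero, mul_zero]
    · simp
  exact LinearMap.congr_fun h z

lemma reprLieE_y (n j : ℤ) (z : V) :
    𝒟.basis.repr ⁅𝒟.E n, z⁆ (Sum.inr (Sum.inr j))
      = ((j : ℂ) - 2*n + s + mu) * 𝒟.basis.repr z (Sum.inr (Sum.inr (j-n))) := by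
  have h : (Finsupp.lapply (Sum.inr (Sum.inr j) : ι3)) ∘ₗ (𝒟.basis.repr.toLinearMap)
        ∘ₗ ((LieAlgebra.ad ℂ V) (𝒟.E n))
      = ((j:ℂ) - 2*n + s + mu) • ((Finsupp.lapply (Sum.inr (Sum.inr (j-n)) : ι3)) ∘ₗ 𝒟.basis.repr.toLinearMap) := by
    apply 𝒟.basis.ext
    rintro (i | i | i) <;>
      simp only [LinearMap.comp_apply, LieAlgebra.ad_apply, LinearEquiv.coe_toLinearMap,
        LinearMap.smul_apply, Finsupp.lapply_apply, smul_eq_mul,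
        𝒟.basis_inl, 𝒟.basis_inr_inl, 𝒟.basis_inr_inr,
        𝒟.bracket_EE, 𝒟.bracket_EM, 𝒟.bracket_EY, map_smul, Finsupp.smul_apply,
        reprE, reprM, reprY]
    · simp
    · simp
    · rcases eq_or_ne i (j - n) with rfl | hne
      · have c1 : (Sum.inr (Sum.inr (n + (j - n))) : ι3) = Sum.inr (Sum.inr j) := by
          rw [show n + (j - n) = j from by omega]
        rw [if_pos c1, if_pos rfl]; push_cast; ring
      · have c1 : (Sum.inr (Sum.inr (n + i)) : ι3) ≠ Sum.inr (Sum.inr j) := by simp; omega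
        have c2 : (Sum.inr (Sum.inr i) : ι3) ≠ Sum.inr (Sum.inr (j - n)) := by simp; omega
        rw [if_neg c1, if_neg c2, mul_zero, mul_zero]
  exact LinearMap.congr_fun h z

lemma reprLieM_e (n j : ℤ) (z : V) :
    𝒟.basis.repr ⁅𝒟.M n, z⁆ (Sum.inl j) = 0 := by
  have h : (Finsupp.lapply (Sum.inl j : ι3)) ∘ₗ (𝒟.basis.repr.toLinearMap)
        ∘ₗ ((LieAlgebra.ad ℂ V) (𝒟.M n)) = 0 := by
    apply 𝒟.basis.ext
    rintro (i | i | i) <;>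
      simp [LieAlgebra.ad_apply, 𝒟.basis_inl, 𝒟.basis_inr_inl, 𝒟.basis_inr_inr,
        bracket_ME, 𝒟.bracket_MM, 𝒟.bracket_MY, reprE, reprM, reprY]
  exact LinearMap.congr_fun h z

lemma reprLieM_y (n j : ℤ) (z : V) :
    𝒟.basis.repr ⁅𝒟.M n, z⁆ (Sum.inr (Sum.inr j)) = 0 := by
  have h : (Finsupp.lapply (Sum.inr (Sum.inr j) : ι3)) ∘ₗ (𝒟.basis.repr.toLinearMap)
        ∘ₗ ((LieAlgebra.ad ℂ V) (𝒟.M n)) = 0 := by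
    apply 𝒟.basis.ext
    rintro (i | i | i) <;>
      simp [LieAlgebra.ad_apply, 𝒟.basis_inl, 𝒟.basis_inr_inl, 𝒟.basis_inr_inr,
        bracket_ME, 𝒟.bracket_MM, 𝒟.bracket_MY, reprE, reprM, reprY]
  exact LinearMap.congr_fun h z

lemma reprLieM_m (n j : ℤ) (z : V) :
    𝒟.basis.repr ⁅𝒟.M n, z⁆ (Sum.inr (Sum.inl j))
      = ((j : ℂ) - 2*n - 2*mu) * 𝒟.basis.repr z (Sum.inl (j-n)) := by
  have h : (Finsupp.lapply (Sum.inr (Sum.inl j) : ι3)) ∘ₗ (𝒟.basis.repr.toLinearMap)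
        ∘ₗ ((LieAlgebra.ad ℂ V) (𝒟.M n))
      = ((j:ℂ) - 2*n - 2*mu) • ((Finsupp.lapply (Sum.inl (j-n) : ι3)) ∘ₗ 𝒟.basis.repr.toLinearMap) := by
    apply 𝒟.basis.ext
    rintro (i | i | i) <;>
      simp only [LinearMap.comp_apply, LieAlgebra.ad_apply, LinearEquiv.coe_toLinearMap,
        LinearMap.smul_apply, Finsupp.lapply_apply, smul_eq_mul,
        𝒟.basis_inl, 𝒟.basis_inr_inl, 𝒟.basis_inr_inr,
        bracket_ME, 𝒟.bracket_MM, 𝒟.bracket_MY, map_smul, Finsupp.smul_apply,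
        reprE, reprM, reprY]
    · rcases eq_or_ne i (j - n) with rfl | hne
      · have c1 : (Sum.inr (Sum.inl ((j - n) + n)) : ι3) = Sum.inr (Sum.inl j) := by
          rw [show (j - n) + n = j from by omega]
        rw [if_pos c1, if_pos rfl]; push_cast; ring
      · have c1 : (Sum.inr (Sum.inl (i + n)) : ι3) ≠ Sum.inr (Sum.inl j) := by simp; omega
        have c2 : (Sum.inl i : ι3) ≠ Sum.inl (j - n) := by simp; omega
        rw [if_neg c1, if_neg c2, mul_zero, mul_zero]
    · simp
    · simp
  exact LinearMap.congr_fun h z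


lemma reprYs (c : ℂ) (k : ℤ) (i : ι3) :
    𝒟.basis.repr (c • 𝒟.Y k) i = if (Sum.inr (Sum.inr k) : ι3) = i then c else 0 := by
  rw [map_smul, Finsupp.smul_apply, reprY, smul_eq_mul]
  split_ifs <;> simp

lemma bracket_YE (n m : ℤ) :
    ⁅𝒟.Y n, 𝒟.E m⁆ = (-((n : ℂ) + s - ((1+1)/2) * m + mu)) • 𝒟.Y (m + n) := by
  rw [← lie_skew, 𝒟.bracket_EY m n, ← neg_smul]

lemma bracket_YM (n m : ℤ) : ⁅𝒟.Y n, 𝒟.M m⁆ = 0 := by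
  rw [← lie_skew, 𝒟.bracket_MY m n, neg_zero]

end Repr

/-- For `λ = 1` and `μ - s - 1/2 ∈ ℤ`, every skew-symmetric biderivation `φ` of
`𝓛(λ, μ, s)` has the form `φ x y = α • ⁅x, y⁆ + β • φ₀ x y` for some `α, β ∈ ℂ`. -/
theorem skew_biderivation_eq_inner_add_phi0
    (lam mu s : ℂ) (t : ℤ) (V : Type*) [LieRing V] [LieAlgebra ℂ V]
    (𝒟 : DSV lam mu s t V) (hs : s = 0 ∨ s = 1 / 2)
    (hlam : lam = 1) (hmu : ∃ r : ℤ, (r : ℂ) = mu - s - 1 / 2)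
    (p : ℤ) (hp : (p : ℂ) = 2 * mu)
    (φ₀ : V →ₗ[ℂ] V →ₗ[ℂ] V)
    (hφ₀LL : ∀ n m : ℤ, φ₀ (𝒟.E n) (𝒟.E m) = ((m : ℂ) - n) • 𝒟.M (n + m - p))
    (hφ₀LM : ∀ n m : ℤ, φ₀ (𝒟.E n) (𝒟.M m) = 0)
    (hφ₀LY : ∀ n m : ℤ, φ₀ (𝒟.E n) (𝒟.Y m) = 0)
    (hφ₀ML : ∀ n m : ℤ, φ₀ (𝒟.M n) (𝒟.E m) = 0)
    (hφ₀MM : ∀ n m : ℤ, φ₀ (𝒟.M n) (𝒟.M m) = 0)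
    (hφ₀MY : ∀ n m : ℤ, φ₀ (𝒟.M n) (𝒟.Y m) = 0)
    (hφ₀YL : ∀ n m : ℤ, φ₀ (𝒟.Y n) (𝒟.E m) = 0)
    (hφ₀YM : ∀ n m : ℤ, φ₀ (𝒟.Y n) (𝒟.M m) = 0)
    (hφ₀YY : ∀ n m : ℤ, φ₀ (𝒟.Y n) (𝒟.Y m) = 0)
    (φ : V →ₗ[ℂ] V →ₗ[ℂ] V)
    (hskew : ∀ x y : V, φ x y = - φ y x)
    (hbd₁ : ∀ x y z : V, φ ⁅x, y⁆ z = ⁅x, φ y z⁆ + ⁅φ x z, y⁆)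
    (hbd₂ : ∀ x y z : V, φ x ⁅y, z⁆ = ⁅φ x y, z⁆ + ⁅y, φ x z⁆) :
    ∃ α β : ℂ, ∀ x y : V, φ x y = α • ⁅x, y⁆ + β • φ₀ x y := by
  subst hlam
  obtain ⟨r, hr⟩ := hmu
  -- nonvanishing facts
  have hq : ∀ n : ℤ, (n : ℂ) + s + mu ≠ 0 := by
    intro n h
    have h2 : ((2*(n+t+r)+1 : ℤ) : ℂ) = 0 := by
      push_cast
      linear_combination 2*h + 2*𝒟.ht + 2*hr
    have h3 : (2*(n+t+r)+1 : ℤ) = 0 := by exact_mod_cast h2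
    omega
  have hq' : ∀ a b : ℤ, ((a : ℂ) - b + s + mu) ≠ 0 := by
    intro a b h
    exact hq (a - b) (by push_cast; linear_combination h)
  have hPne : ∀ a b : ℤ, a - b + p ≠ 0 → ((a : ℂ) - b + 2*mu) ≠ 0 := by
    intro a b ha h
    apply ha
    have : ((a - b + p : ℤ) : ℂ) = 0 := by push_cast; linear_combination h + hp
    exact_mod_cast this
  have hPne' : ∀ a b : ℤ, a - b - p ≠ 0 → ((a : ℂ) - b - 2*mu) ≠ 0 := by
    intro a b ha h
    apply ha
    have : ((a - b - p : ℤ) : ℂ) = 0 := by push_cast; linear_combination h - hp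
    exact_mod_cast this
  have hZne : ∀ a b : ℤ, a ≠ b → ((a : ℂ) - b) ≠ 0 := by
    intro a b hab h
    exact hab (by exact_mod_cast sub_eq_zero.mp h)
  have K := keyIdentity φ hskew hbd₁ hbd₂
  -- basic bracket decompositions
  have decE : ∀ k : ℤ, (-(1/2 : ℂ)) • ((⁅𝒟.E (-1), 𝒟.E (k+1)⁆ : V) - ⁅𝒟.E (-2), 𝒟.E (k+2)⁆) = 𝒟.E k := by
    intro k
    rw [𝒟.bracket_EE, 𝒟.bracket_EE, show (-1 : ℤ) + (k+1) = k from by omega,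
      show (-2 : ℤ) + (k+2) = k from by omega, ← sub_smul, smul_smul,
      show (-(1/2 : ℂ)) * (((k+1 : ℤ) : ℂ) - ((-1 : ℤ) : ℂ) - (((k+2 : ℤ) : ℂ) - ((-2 : ℤ) : ℂ))) = 1 from by push_cast; ring,
      one_smul]
  have decM : ∀ k : ℤ, ((1/2 : ℂ)) • ((⁅𝒟.E 1, 𝒟.M (k-1)⁆ : V) - ⁅𝒟.E 2, 𝒟.M (k-2)⁆) = 𝒟.M k := by
    intro k
    rw [𝒟.bracket_EM, 𝒟.bracket_EM, show (1 : ℤ) + (k-1) = k from by omega,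
      show (2 : ℤ) + (k-2) = k from by omega, ← sub_smul, smul_smul,
      show ((1/2 : ℂ)) * ((((k-1 : ℤ) : ℂ) - 1*((1:ℤ):ℂ) + 2*mu) - (((k-2 : ℤ) : ℂ) - 1*((2:ℤ):ℂ) + 2*mu)) = 1 from by push_cast; ring,
      one_smul]
  have decY : ∀ k : ℤ, (⁅𝒟.E 0, 𝒟.Y k⁆ : V) = ((k : ℂ) + s + mu) • 𝒟.Y k := by
    intro k
    rw [𝒟.bracket_EY, show (0 : ℤ) + k = k from by omega,
      show ((k : ℂ) + s - ((1+1)/2) * ((0:ℤ):ℂ) + mu) = ((k:ℂ) + s + mu) from by push_cast; ring]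
  have decY' : ∀ k : ℤ, (((k : ℂ) + s + mu)⁻¹) • (⁅𝒟.E 0, 𝒟.Y k⁆ : V) = 𝒟.Y k := by
    intro k
    rw [decY, inv_smul_smul₀ (hq k)]
  -- the auxiliary maps
  set FE : ℤ → V := fun k => (-(1/2 : ℂ)) • (φ (𝒟.E (-1)) (𝒟.E (k+1)) - φ (𝒟.E (-2)) (𝒟.E (k+2))) with hFEdef
  set FM : ℤ → V := fun k => ((1/2 : ℂ)) • (φ (𝒟.E 1) (𝒟.M (k-1)) - φ (𝒟.E 2) (𝒟.M (k-2))) with hFMdef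
  set FY : ℤ → V := fun k => (((k : ℂ) + s + mu)⁻¹) • (φ (𝒟.E 0) (𝒟.Y k)) with hFYdef
  have PE : ∀ (k : ℤ) (u v : V), ⁅FE k, ⁅u, v⁆⁆ = ⁅𝒟.E k, φ u v⁆ := by
    intro k u v
    rw [hFEdef]
    simp only []
    rw [smul_lie, sub_lie, K, K, ← sub_lie, ← smul_lie, decE k]
  have PM : ∀ (k : ℤ) (u v : V), ⁅FM k, ⁅u, v⁆⁆ = ⁅𝒟.M k, φ u v⁆ := by
    intro k u v
    rw [hFMdef]
    simp only []
    rw [smul_lie, sub_lie, K, K, ← sub_lie, ← smul_lie, decM k]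
  have PY : ∀ (k : ℤ) (u v : V), ⁅FY k, ⁅u, v⁆⁆ = ⁅𝒟.Y k, φ u v⁆ := by
    intro k u v
    rw [hFYdef]
    simp only []
    rw [smul_lie, K, ← smul_lie, decY' k]
  -- symmetry relations
  have S1 : ∀ k l : ℤ, ⁅FE k, 𝒟.E l⁆ = ⁅𝒟.E k, FE l⁆ := by
    intro k l
    conv_lhs => rw [← decE l]
    rw [lie_smul, lie_sub, PE, PE, ← lie_sub, ← lie_smul]
  have S2 : ∀ k l : ℤ, ⁅FE k, 𝒟.M l⁆ = ⁅𝒟.E k, FM l⁆ := by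
    intro k l
    conv_lhs => rw [← decM l]
    rw [lie_smul, lie_sub, PE, PE, ← lie_sub, ← lie_smul]
  have S3 : ∀ k l : ℤ, ⁅FE k, 𝒟.Y l⁆ = ⁅𝒟.E k, FY l⁆ := by
    intro k l
    conv_lhs => rw [← decY' l]
    rw [lie_smul, PE, ← lie_smul]
  -- Step 1: shape of FE k
  have hEFE : ∀ k : ℤ, ⁅𝒟.E k, FE k⁆ = 0 := by
    intro k
    have h := S1 k k
    have h4 : (2 : ℂ) • (⁅𝒟.E k, FE k⁆ : V) = 0 := by
      rw [two_smul]
      nth_rewrite 1 [← h]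
      rw [← lie_skew (𝒟.E k) (FE k)]
      exact add_neg_cancel _
    exact (smul_eq_zero.mp h4).resolve_left (by norm_num)
  have cE_e : ∀ k i : ℤ, i ≠ k → 𝒟.basis.repr (FE k) (Sum.inl i) = 0 := by
    intro k i hik
    have h := reprLieE_e 𝒟 k (i+k) (FE k)
    rw [hEFE k, show i + k - k = i from by omega, map_zero, Finsupp.coe_zero, Pi.zero_apply] at h
    have hc : ((i+k : ℤ) : ℂ) - 2*k ≠ 0 := by
      intro hc0
      exact hZne i k hik (by push_cast at hc0 ⊢; linear_combination hc0)
    exact (mul_eq_zero.mp h.symm).resolve_left hc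
  have cE_m : ∀ k i : ℤ, i ≠ k - p → 𝒟.basis.repr (FE k) (Sum.inr (Sum.inl i)) = 0 := by
    intro k i hik
    have h := reprLieE_m 𝒟 k (i+k) (FE k)
    rw [hEFE k, show i + k - k = i from by omega, map_zero, Finsupp.coe_zero, Pi.zero_apply] at h
    have hc : ((i+k : ℤ) : ℂ) - 2*k + 2*mu ≠ 0 := by
      have := hPne i k (by omega)
      intro hc0; exact this (by push_cast at hc0 ⊢; linear_combination hc0)
    exact (mul_eq_zero.mp h.symm).resolve_left hc
  have cE_y : ∀ k i : ℤ, 𝒟.basis.repr (FE k) (Sum.inr (Sum.inr i)) = 0 := by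
    intro k i
    have h := reprLieE_y 𝒟 k (i+k) (FE k)
    rw [hEFE k, show i + k - k = i from by omega, map_zero, Finsupp.coe_zero, Pi.zero_apply] at h
    have hc : ((i+k : ℤ) : ℂ) - 2*k + s + mu ≠ 0 := by
      have := hq' i k
      intro hc0; exact this (by push_cast at hc0 ⊢; linear_combination hc0)
    exact (mul_eq_zero.mp h.symm).resolve_left hc
  have S2' : ∀ k l : ℤ, ⁅𝒟.E k, FM l⁆ = -⁅𝒟.M l, FE k⁆ :=
    fun k l => (S2 k l).symm.trans (lie_skew (FE k) (𝒟.M l)).symm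
  -- Step 4: FM l = α • M l
  have cFM_e : ∀ l i : ℤ, 𝒟.basis.repr (FM l) (Sum.inl i) = 0 := by
    intro l i
    have h : 𝒟.basis.repr ⁅𝒟.E (i-1), FM l⁆ (Sum.inl (i+(i-1)))
        = 𝒟.basis.repr (-⁅𝒟.M l, FE (i-1)⁆) (Sum.inl (i+(i-1))) := by rw [S2' (i-1) l]
    rw [reprLieE_e, map_neg, Finsupp.coe_neg, Pi.neg_apply, reprLieM_e, neg_zero,
      show i + (i-1) - (i-1) = i from by omega,
      show ((i+(i-1) : ℤ) : ℂ) - 2*((i-1 : ℤ) : ℂ) = 1 from by push_cast; ring, one_mul] at h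
    exact h
  have cFM_y : ∀ l i : ℤ, 𝒟.basis.repr (FM l) (Sum.inr (Sum.inr i)) = 0 := by
    intro l i
    have h : 𝒟.basis.repr ⁅𝒟.E 0, FM l⁆ (Sum.inr (Sum.inr i))
        = 𝒟.basis.repr (-⁅𝒟.M l, FE 0⁆) (Sum.inr (Sum.inr i)) := by rw [S2' 0 l]
    rw [reprLieE_y, map_neg, Finsupp.coe_neg, Pi.neg_apply, reprLieM_y, neg_zero,
      show i - 0 = i from by omega] at h
    have hc : (i : ℂ) - 2*((0:ℤ) : ℂ) + s + mu ≠ 0 := by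
      have := hq' i 0
      intro hc0; exact this (by push_cast at hc0 ⊢; linear_combination hc0)
    exact (mul_eq_zero.mp h).resolve_left hc
  have cFM_m_ne : ∀ l i : ℤ, i ≠ l → 𝒟.basis.repr (FM l) (Sum.inr (Sum.inl i)) = 0 := by
    intro l i hil
    have h : 𝒟.basis.repr ⁅𝒟.E (i+p+1), FM l⁆ (Sum.inr (Sum.inl (i+(i+p+1))))
        = 𝒟.basis.repr (-⁅𝒟.M l, FE (i+p+1)⁆) (Sum.inr (Sum.inl (i+(i+p+1)))) := by
      rw [S2' (i+p+1) l]
    rw [reprLieE_m, map_neg, Finsupp.coe_neg, Pi.neg_apply, reprLieM_m,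
      show i + (i+p+1) - (i+p+1) = i from by omega,
      cE_e (i+p+1) (i+(i+p+1)-l) (by omega), mul_zero, neg_zero] at h
    have hc : ((i+(i+p+1) : ℤ) : ℂ) - 2*((i+p+1 : ℤ) : ℂ) + 2*mu ≠ 0 := by
      have := hPne i (i+p+1) (by omega)
      intro hc0; exact this (by push_cast at hc0 ⊢; linear_combination hc0)
    exact (mul_eq_zero.mp h).resolve_left hc
  have haFM : ∀ k l : ℤ, k ≠ l + p →
      𝒟.basis.repr (FE k) (Sum.inl k) = 𝒟.basis.repr (FM l) (Sum.inr (Sum.inl l)) := by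
    intro k l hkl
    have h : 𝒟.basis.repr ⁅𝒟.E k, FM l⁆ (Sum.inr (Sum.inl (l+k)))
        = 𝒟.basis.repr (-⁅𝒟.M l, FE k⁆) (Sum.inr (Sum.inl (l+k))) := by rw [S2' k l]
    rw [reprLieE_m, map_neg, Finsupp.coe_neg, Pi.neg_apply, reprLieM_m,
      show l + k - k = l from by omega, show l + k - l = k from by omega] at h
    have hc : ((l+k : ℤ) : ℂ) - 2*k + 2*mu ≠ 0 := by
      have := hPne l k (by omega)
      intro hc0; exact this (by push_cast at hc0 ⊢; linear_combination hc0)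
    have hco : -(((l+k : ℤ) : ℂ) - 2*l - 2*mu) = ((l+k : ℤ) : ℂ) - 2*k + 2*mu := by
      push_cast; ring
    rw [← neg_mul, hco] at h
    exact (mul_left_cancel₀ hc h.symm)
  set α := 𝒟.basis.repr (FM 0) (Sum.inr (Sum.inl 0)) with hαdef
  have hFMm_diag : ∀ l : ℤ, 𝒟.basis.repr (FM l) (Sum.inr (Sum.inl l)) = α := by
    intro l
    have h1 := haFM (p + l.natAbs + 1) l (by omega)
    have h2 := haFM (p + l.natAbs + 1) 0 (by omega)
    rw [← h1, h2]
  have haconst : ∀ k : ℤ, 𝒟.basis.repr (FE k) (Sum.inl k) = α := by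
    intro k
    rw [haFM k (k-p-1) (by omega), hFMm_diag]
  have hFMeq : ∀ l : ℤ, FM l = α • 𝒟.M l := by
    intro l
    apply 𝒟.basis.ext_elem
    intro i
    conv_rhs => rw [map_smul, Finsupp.smul_apply, reprM 𝒟 l i, smul_eq_mul]
    rcases i with i | i | i
    · rw [cFM_e l i, if_neg (by simp), mul_zero]
    · rcases eq_or_ne i l with rfl | hne
      · rw [hFMm_diag i, if_pos rfl, mul_one]
      · rw [cFM_m_ne l i hne, if_neg (by simp [hne.symm]), mul_zero]
    · rw [cFM_y l i, if_neg (by simp), mul_zero]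
  -- Step 5: shape of FE completed
  have S1' : ∀ k l : ℤ, ⁅𝒟.E k, FE l⁆ = -⁅𝒟.E l, FE k⁆ :=
    fun k l => (S1 k l).symm.trans (lie_skew (FE k) (𝒟.E l)).symm
  have hbeq : ∀ k l : ℤ, k ≠ l →
      𝒟.basis.repr (FE l) (Sum.inr (Sum.inl (l-p))) = 𝒟.basis.repr (FE k) (Sum.inr (Sum.inl (k-p))) := by
    intro k l hkl
    have h : 𝒟.basis.repr ⁅𝒟.E k, FE l⁆ (Sum.inr (Sum.inl (k+l-p)))
        = 𝒟.basis.repr (-⁅𝒟.E l, FE k⁆) (Sum.inr (Sum.inl (k+l-p))) := by rw [S1' k l]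
    rw [reprLieE_m, map_neg, Finsupp.coe_neg, Pi.neg_apply, reprLieE_m,
      show k + l - p - k = l - p from by omega, show k + l - p - l = k - p from by omega,
      ← neg_mul] at h
    have e1 : ((k+l-p : ℤ) : ℂ) - 2*((k : ℤ) : ℂ) + 2*mu = ((l : ℂ) - k) := by
      push_cast; linear_combination -hp
    have e2 : -(((k+l-p : ℤ) : ℂ) - 2*((l : ℤ) : ℂ) + 2*mu) = ((l : ℂ) - k) := by
      push_cast; linear_combination hp
    rw [e1, e2] at h
    exact mul_left_cancel₀ (hZne l k (Ne.symm hkl)) h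
  set β := 𝒟.basis.repr (FE 0) (Sum.inr (Sum.inl (0-p))) with hβdef
  have hbconst : ∀ k : ℤ, 𝒟.basis.repr (FE k) (Sum.inr (Sum.inl (k-p))) = β := by
    intro k
    rcases eq_or_ne k 0 with rfl | hne
    · exact hβdef.symm
    · exact hbeq 0 k hne.symm
  have hFEeq : ∀ k : ℤ, FE k = α • 𝒟.E k + β • 𝒟.M (k-p) := by
    intro k
    apply 𝒟.basis.ext_elem
    intro i
    conv_rhs => rw [map_add, map_smul, map_smul, Finsupp.add_apply,
      Finsupp.smul_apply, Finsupp.smul_apply, reprE 𝒟 k i, reprM 𝒟 (k-p) i,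
      smul_eq_mul, smul_eq_mul]
    rcases i with i | i | i
    · rcases eq_or_ne i k with rfl | hne
      · rw [haconst i, if_pos rfl, if_neg (by simp), mul_one, mul_zero, add_zero]
      · rw [cE_e k i hne, if_neg (by simp [hne.symm]), if_neg (by simp), mul_zero, mul_zero, add_zero]
    · rcases eq_or_ne i (k-p) with rfl | hne
      · rw [hbconst k, if_neg (by simp), if_pos rfl, mul_one, mul_zero, zero_add]
      · rw [cE_m k i hne, if_neg (by simp), if_neg (by simp [hne.symm]), mul_zero, mul_zero, add_zero]
    · rw [cE_y k i, if_neg (by simp), if_neg (by simp), mul_zero, mul_zero, add_zero]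
  -- Step 6: FY l = α • Y l
  have hFEY : ∀ k l : ℤ, ⁅FE k, 𝒟.Y l⁆ = (α * ((l : ℂ) + s - k + mu)) • 𝒟.Y (k+l) := by
    intro k l
    rw [hFEeq k, add_lie, smul_lie, smul_lie, 𝒟.bracket_EY, 𝒟.bracket_MY, smul_zero,
      add_zero, smul_smul]
    congr 1
    push_cast
    ring
  have cFY_e : ∀ l i : ℤ, 𝒟.basis.repr (FY l) (Sum.inl i) = 0 := by
    intro l i
    have h : 𝒟.basis.repr ⁅𝒟.E (i-1), FY l⁆ (Sum.inl (i+(i-1)))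
        = 𝒟.basis.repr ⁅FE (i-1), 𝒟.Y l⁆ (Sum.inl (i+(i-1))) := by rw [S3]
    rw [reprLieE_e, hFEY, reprYs, if_neg (by simp),
      show i + (i-1) - (i-1) = i from by omega,
      show ((i+(i-1) : ℤ) : ℂ) - 2*((i-1 : ℤ) : ℂ) = 1 from by push_cast; ring, one_mul] at h
    exact h
  have cFY_m : ∀ l i : ℤ, 𝒟.basis.repr (FY l) (Sum.inr (Sum.inl i)) = 0 := by
    intro l i
    have h : 𝒟.basis.repr ⁅𝒟.E (i+p+1), FY l⁆ (Sum.inr (Sum.inl (i+(i+p+1))))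
        = 𝒟.basis.repr ⁅FE (i+p+1), 𝒟.Y l⁆ (Sum.inr (Sum.inl (i+(i+p+1)))) := by rw [S3]
    rw [reprLieE_m, hFEY, reprYs, if_neg (by simp),
      show i + (i+p+1) - (i+p+1) = i from by omega] at h
    have hc : ((i+(i+p+1) : ℤ) : ℂ) - 2*((i+p+1 : ℤ) : ℂ) + 2*mu ≠ 0 := by
      have := hPne i (i+p+1) (by omega)
      intro hc0; exact this (by push_cast at hc0 ⊢; linear_combination hc0)
    exact (mul_eq_zero.mp h).resolve_left hc
  have cFY_y_ne : ∀ l i : ℤ, i ≠ l → 𝒟.basis.repr (FY l) (Sum.inr (Sum.inr i)) = 0 := by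
    intro l i hil
    have h : 𝒟.basis.repr ⁅𝒟.E 0, FY l⁆ (Sum.inr (Sum.inr i))
        = 𝒟.basis.repr ⁅FE 0, 𝒟.Y l⁆ (Sum.inr (Sum.inr i)) := by rw [S3]
    rw [reprLieE_y, hFEY, reprYs,
      if_neg (by simp; omega),
      show i - 0 = i from by omega] at h
    have hc : ((i : ℤ) : ℂ) - 2*((0 : ℤ) : ℂ) + s + mu ≠ 0 := by
      have := hq' i 0
      intro hc0; exact this (by push_cast at hc0 ⊢; linear_combination hc0)
    exact (mul_eq_zero.mp h).resolve_left hc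
  have cFY_y_diag : ∀ l : ℤ, 𝒟.basis.repr (FY l) (Sum.inr (Sum.inr l)) = α := by
    intro l
    have h : 𝒟.basis.repr ⁅𝒟.E 0, FY l⁆ (Sum.inr (Sum.inr l))
        = 𝒟.basis.repr ⁅FE 0, 𝒟.Y l⁆ (Sum.inr (Sum.inr l)) := by rw [S3]
    rw [reprLieE_y, hFEY, reprYs,
      if_pos (by rw [show (0 : ℤ) + l = l from by omega]),
      show l - 0 = l from by omega] at h
    have hc : ((l : ℤ) : ℂ) - 2*((0 : ℤ) : ℂ) + s + mu ≠ 0 := by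
      have := hq' l 0
      intro hc0; exact this (by push_cast at hc0 ⊢; linear_combination hc0)
    have e1 : α * (((l : ℤ) : ℂ) + s - ((0 : ℤ) : ℂ) + mu)
        = (((l : ℤ) : ℂ) - 2*((0 : ℤ) : ℂ) + s + mu) * α := by push_cast; ring
    rw [e1] at h
    exact mul_left_cancel₀ hc h
  have hFYeq : ∀ l : ℤ, FY l = α • 𝒟.Y l := by
    intro l
    apply 𝒟.basis.ext_elem
    intro i
    conv_rhs => rw [map_smul, Finsupp.smul_apply, reprY 𝒟 l i, smul_eq_mul]
    rcases i with i | i | i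
    · rw [cFY_e l i, if_neg (by simp), mul_zero]
    · rw [cFY_m l i, if_neg (by simp), mul_zero]
    · rcases eq_or_ne i l with rfl | hne
      · rw [cFY_y_diag i, if_pos rfl, mul_one]
      · rw [cFY_y_ne l i hne, if_neg (by simp [hne.symm]), mul_zero]
  -- trivial center argument
  have hcentral : ∀ z : V, (∀ u v : V, ⁅z, ⁅u, v⁆⁆ = 0) → z = 0 := by
    intro z hz
    have hE : ∀ k : ℤ, ⁅𝒟.E k, z⁆ = 0 := by
      intro k
      have h1 : ⁅z, 𝒟.E k⁆ = 0 := by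
        rw [← decE k, lie_smul, lie_sub, hz, hz, sub_zero, smul_zero]
      rw [← lie_skew, h1, neg_zero]
    have he : ∀ i : ℤ, 𝒟.basis.repr z (Sum.inl i) = 0 := by
      intro i
      have h := reprLieE_e 𝒟 (i-1) (i+(i-1)) z
      rw [hE, map_zero, Finsupp.coe_zero, Pi.zero_apply,
        show i+(i-1)-(i-1) = i from by omega,
        show ((i+(i-1):ℤ):ℂ) - 2*((i-1:ℤ):ℂ) = 1 from by push_cast; ring, one_mul] at h
      exact h.symm
    have hm : ∀ i : ℤ, 𝒟.basis.repr z (Sum.inr (Sum.inl i)) = 0 := by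
      intro i
      have h := reprLieE_m 𝒟 (i+p+1) (i+(i+p+1)) z
      rw [hE, map_zero, Finsupp.coe_zero, Pi.zero_apply,
        show i+(i+p+1)-(i+p+1) = i from by omega] at h
      have hc : ((i+(i+p+1) : ℤ) : ℂ) - 2*((i+p+1 : ℤ) : ℂ) + 2*mu ≠ 0 := by
        have := hPne i (i+p+1) (by omega)
        intro hc0; exact this (by push_cast at hc0 ⊢; linear_combination hc0)
      exact (mul_eq_zero.mp h.symm).resolve_left hc
    have hy : ∀ i : ℤ, 𝒟.basis.repr z (Sum.inr (Sum.inr i)) = 0 := by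
      intro i
      have h := reprLieE_y 𝒟 0 i z
      rw [hE, map_zero, Finsupp.coe_zero, Pi.zero_apply, show i - 0 = i from by omega] at h
      have hc : ((i : ℤ) : ℂ) - 2*((0:ℤ):ℂ) + s + mu ≠ 0 := by
        have := hq' i 0
        intro hc0; exact this (by push_cast at hc0 ⊢; linear_combination hc0)
      exact (mul_eq_zero.mp h.symm).resolve_left hc
    apply 𝒟.basis.ext_elem
    intro i
    rw [map_zero, Finsupp.coe_zero, Pi.zero_apply]
    rcases i with i | i | i
    · exact he i
    · exact hm i
    · exact hy i
  -- values of φ on basis pairs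
  have phiEE : ∀ n m : ℤ, φ (𝒟.E n) (𝒟.E m) = ((m:ℂ) - n) • FE (n+m) := by
    intro n m
    have hd : ∀ u v : V, ⁅(φ (𝒟.E n) (𝒟.E m) - ((m:ℂ) - n) • FE (n+m) : V), ⁅u,v⁆⁆ = 0 := by
      intro u v
      rw [sub_lie, smul_lie, K, PE, 𝒟.bracket_EE, smul_lie]
      exact sub_self _
    exact sub_eq_zero.mp (hcentral _ hd)
  have phiEM : ∀ n m : ℤ, φ (𝒟.E n) (𝒟.M m) = ((m:ℂ) - 1 * n + 2*mu) • FM (n+m) := by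
    intro n m
    have hd : ∀ u v : V, ⁅(φ (𝒟.E n) (𝒟.M m) - ((m:ℂ) - 1 * n + 2*mu) • FM (n+m) : V), ⁅u,v⁆⁆ = 0 := by
      intro u v
      rw [sub_lie, smul_lie, K, PM, 𝒟.bracket_EM, smul_lie]
      exact sub_self _
    exact sub_eq_zero.mp (hcentral _ hd)
  have phiEY : ∀ n m : ℤ, φ (𝒟.E n) (𝒟.Y m) = ((m:ℂ) + s - ((1+1)/2) * n + mu) • FY (n+m) := by
    intro n m
    have hd : ∀ u v : V, ⁅(φ (𝒟.E n) (𝒟.Y m) - ((m:ℂ) + s - ((1+1)/2) * n + mu) • FY (n+m) : V), ⁅u,v⁆⁆ = 0 := by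
      intro u v
      rw [sub_lie, smul_lie, K, PY, 𝒟.bracket_EY, smul_lie]
      exact sub_self _
    exact sub_eq_zero.mp (hcentral _ hd)
  have phiYY : ∀ n m : ℤ, φ (𝒟.Y n) (𝒟.Y m) = ((m:ℂ) - n) • FM (n+m+t) := by
    intro n m
    have hd : ∀ u v : V, ⁅(φ (𝒟.Y n) (𝒟.Y m) - ((m:ℂ) - n) • FM (n+m+t) : V), ⁅u,v⁆⁆ = 0 := by
      intro u v
      rw [sub_lie, smul_lie, K, PM, 𝒟.bracket_YY, smul_lie]
      exact sub_self _
    exact sub_eq_zero.mp (hcentral _ hd)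
  have phiMM : ∀ n m : ℤ, φ (𝒟.M n) (𝒟.M m) = 0 := by
    intro n m
    refine hcentral _ (fun u v => ?_)
    rw [K, 𝒟.bracket_MM, zero_lie]
  have phiMY : ∀ n m : ℤ, φ (𝒟.M n) (𝒟.Y m) = 0 := by
    intro n m
    refine hcentral _ (fun u v => ?_)
    rw [K, 𝒟.bracket_MY, zero_lie]
  -- final assembly
  refine ⟨α, β, ?_⟩
  have main : φ = α • (LieAlgebra.ad ℂ V : V →ₗ[ℂ] Module.End ℂ V) + β • φ₀ := by
    apply 𝒟.basis.ext
    intro i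
    apply 𝒟.basis.ext
    intro j
    have happ : ((α • (LieAlgebra.ad ℂ V : V →ₗ[ℂ] Module.End ℂ V) + β • φ₀) (𝒟.basis i)) (𝒟.basis j)
        = α • ⁅𝒟.basis i, 𝒟.basis j⁆ + β • φ₀ (𝒟.basis i) (𝒟.basis j) := by
      simp [LieAlgebra.ad_apply]
    rw [happ]
    rcases i with n | n | n <;> rcases j with m | m | m <;>
      simp only [𝒟.basis_inl, 𝒟.basis_inr_inl, 𝒟.basis_inr_inr]
    · rw [phiEE, hFEeq, hφ₀LL, 𝒟.bracket_EE]; module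
    · rw [phiEM, hFMeq, hφ₀LM, 𝒟.bracket_EM]; module
    · rw [phiEY, hFYeq, hφ₀LY, 𝒟.bracket_EY]; module
    · rw [hskew (𝒟.M n) (𝒟.E m), phiEM, hFMeq, hφ₀ML, bracket_ME 𝒟]; module
    · rw [phiMM, hφ₀MM, 𝒟.bracket_MM]; simp
    · rw [phiMY, hφ₀MY, 𝒟.bracket_MY]; simp
    · rw [hskew (𝒟.Y n) (𝒟.E m), phiEY, hFYeq, hφ₀YL, bracket_YE 𝒟]; module
    · rw [hskew (𝒟.Y n) (𝒟.M m), phiMY, hφ₀YM, bracket_YM 𝒟]; simp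
    · rw [phiYY, hFMeq, hφ₀YY, 𝒟.bracket_YY]; module
  intro x y
  rw [main]
  simp [LieAlgebra.ad_apply]
end
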